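/- arXiv:1112.6142 — 9 statements merged into one kernel-verified Lean document; each statement's English description precedes it below -/
import Mathlib

section
/- For every real number α and every integer n ≥ 2, the minimum of ‖F_{n-1}α‖, ‖F_n α‖ and ‖F_{n+1}α‖ is at most 1/3. -/
/-- Distance from a real number to the nearest integer. -/
noncomputable def distNearestInt (x : ℝ) : ℝ := |x - round x|

lemma key_min_le (x y : ℝ) :
    min (min (distNearestInt x) (distNearestInt y)) (distNearestInt (x + y)) ≤ 1 / 3 := by
  by_contra h
  push_neg at h
  rw [lt_min_iff, lt_min_iff] at h
  obtain ⟨⟨hx, hy⟩, hxy⟩ := h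
  unfold distNearestInt at *
  have ha : |x - round x| ≤ 1 / 2 := abs_sub_round x
  have hb : |y - round y| ≤ 1 / 2 := abs_sub_round y
  have h0 : |x + y - round (x + y)| ≤ |x + y - ((round x + round y : ℤ) : ℝ)| :=
    round_le (x + y) _
  have h1 : |x + y - round (x + y)| ≤ |x + y - ((round x + round y + 1 : ℤ) : ℝ)| :=
    round_le (x + y) _
  have h2 : |x + y - round (x + y)| ≤ |x + y - ((round x + round y - 1 : ℤ) : ℝ)| :=
    round_le (x + y) _
  push_cast at h0 h1 h2
  rcases abs_cases (x - round x) with ⟨e1, _⟩ | ⟨e1, _⟩ <;>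
  rcases abs_cases (y - round y) with ⟨e2, _⟩ | ⟨e2, _⟩ <;>
  rcases abs_cases (x + y - (round x + round y : ℝ)) with ⟨e3, _⟩ | ⟨e3, _⟩ <;>
  rcases abs_cases (x + y - (round x + round y + 1 : ℝ)) with ⟨e4, _⟩ | ⟨e4, _⟩ <;>
  rcases abs_cases (x + y - (round x + round y - 1 : ℝ)) with ⟨e5, _⟩ | ⟨e5, _⟩ <;>
  linarith

theorem fib_three_consecutive_close (α : ℝ) (n : ℕ) (hn : 2 ≤ n) :
    min (min (distNearestInt ((Nat.fib (n - 1) : ℝ) * α))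
             (distNearestInt ((Nat.fib n : ℝ) * α)))
        (distNearestInt ((Nat.fib (n + 1) : ℝ) * α)) ≤ 1 / 3 := by
  obtain ⟨m, rfl⟩ : ∃ m, n = m + 1 := ⟨n - 1, by omega⟩
  have hfib : ((Nat.fib (m + 1 + 1) : ℝ)) * α
      = (Nat.fib m : ℝ) * α + (Nat.fib (m + 1) : ℝ) * α := by
    rw [Nat.fib_add_two]; push_cast; ring
  simpa [Nat.add_sub_cancel, hfib] using
    key_min_le ((Nat.fib m : ℝ) * α) ((Nat.fib (m + 1) : ℝ) * α)
end

section
/- For every real number α and every integer n ≥ 1, the minimum of ‖φ^{n-1}α‖, ‖φ^n α‖ and ‖φ^{n+1}α‖ is at most 1/3. -/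
/-- The golden ratio. -/
noncomputable def φ : ℝ := (1 + Real.sqrt 5) / 2

lemma distNearestInt_le (x : ℝ) (m : ℤ) : distNearestInt x ≤ |x - m| := by
  rw [distNearestInt, abs_sub_round_eq_min]
  have hf := Int.fract_nonneg x
  have hf1 := Int.fract_lt_one x
  have hx : (⌊x⌋ : ℝ) + Int.fract x = x := Int.floor_add_fract x
  rcases le_or_gt m ⌊x⌋ with h | h
  · have h' : (m : ℝ) ≤ (⌊x⌋ : ℝ) := by exact_mod_cast h
    calc min (Int.fract x) (1 - Int.fract x) ≤ Int.fract x := min_le_left _ _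
      _ ≤ x - m := by linarith
      _ ≤ |x - m| := le_abs_self _
  · have h' : (⌊x⌋ : ℝ) + 1 ≤ (m : ℝ) := by exact_mod_cast h
    calc min (Int.fract x) (1 - Int.fract x) ≤ 1 - Int.fract x := min_le_right _ _
      _ ≤ m - x := by linarith
      _ ≤ |x - m| := by rw [abs_sub_comm]; exact le_abs_self _

lemma phi_sq : φ ^ 2 = φ + 1 := by
  have h : Real.sqrt 5 ^ 2 = 5 := Real.sq_sqrt (by norm_num)
  unfold φ; nlinarith [h]

theorem golden_powers_three_consecutive_close (α : ℝ) (n : ℕ) (hn : 1 ≤ n) :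
    min (min (distNearestInt (φ ^ (n - 1) * α))
             (distNearestInt (φ ^ n * α)))
        (distNearestInt (φ ^ (n + 1) * α)) ≤ 1 / 3 := by
  obtain ⟨m, rfl⟩ := Nat.exists_eq_add_of_le hn
  simp only [Nat.add_sub_cancel_left, Nat.add_sub_cancel]
  set x := φ ^ m * α with hxdef
  set y := φ ^ (1 + m) * α with hydef
  have hsum : φ ^ (1 + m + 1) * α = x + y := by
    have : φ ^ (1 + m + 1) = φ ^ m * φ ^ 2 := by ring
    rw [this, phi_sq, hxdef, hydef]
    ring
  rw [hsum]
  by_cases hx : distNearestInt x ≤ 1 / 3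
  · exact le_trans (le_trans (min_le_left _ _) (min_le_left _ _)) hx
  by_cases hy : distNearestInt y ≤ 1 / 3
  · exact le_trans (le_trans (min_le_left _ _) (min_le_right _ _)) hy
  push_neg at hx hy
  refine le_trans (min_le_right _ _) ?_
  set a := x - round x with ha
  set b := y - round y with hb
  have hxa : 1/3 < |a| := hx
  have hyb : 1/3 < |b| := hy
  have ha2 : |a| ≤ 1/2 := abs_sub_round x
  have hb2 : |b| ≤ 1/2 := abs_sub_round y
  rcases le_or_gt 0 a with hap | han <;> rcases le_or_gt 0 b with hbp | hbn
  · -- both nonneg : use m = round x + round y + 1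
    have := distNearestInt_le (x + y) (round x + round y + 1)
    refine le_trans this ?_
    have : x + y - ((round x + round y + 1 : ℤ) : ℝ) = a + b - 1 := by
      push_cast; rw [ha, hb]; ring
    rw [this]
    rw [abs_of_nonneg hap] at hxa ha2
    rw [abs_of_nonneg hbp] at hyb hb2
    rw [abs_le]; constructor <;> linarith
  · have := distNearestInt_le (x + y) (round x + round y)
    refine le_trans this ?_
    have : x + y - ((round x + round y : ℤ) : ℝ) = a + b := by
      push_cast; rw [ha, hb]; ring
    rw [this]
    rw [abs_of_nonneg hap] at hxa ha2
    rw [abs_of_neg hbn] at hyb hb2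
    rw [abs_le]; constructor <;> linarith
  · have := distNearestInt_le (x + y) (round x + round y)
    refine le_trans this ?_
    have : x + y - ((round x + round y : ℤ) : ℝ) = a + b := by
      push_cast; rw [ha, hb]; ring
    rw [this]
    rw [abs_of_neg han] at hxa ha2
    rw [abs_of_nonneg hbp] at hyb hb2
    rw [abs_le]; constructor <;> linarith
  · have := distNearestInt_le (x + y) (round x + round y - 1)
    refine le_trans this ?_
    have : x + y - ((round x + round y - 1 : ℤ) : ℝ) = a + b + 1 := by
      push_cast; rw [ha, hb]; ring
    rw [this]
    rw [abs_of_neg han] at hxa ha2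
    rw [abs_of_neg hbn] at hyb hb2
    rw [abs_le]; constructor <;> linarith
end

section
/- Let d_N^1 denote the supremum over all real α of min_{1 ≤ k ≤ N} ‖F_k α‖. Then the sequence (d_N^1) converges as N → ∞ and lim_{N→∞} d_N^1 = (φ−1)/(φ+2). -/
/-- `minFib N α` is `min_{1 ≤ k ≤ N} ‖F_k α‖` (junk value `0` if `N = 0`). -/
noncomputable def minFib (N : ℕ) (α : ℝ) : ℝ :=
  if h : (Finset.Icc 1 N).Nonempty then
    (Finset.Icc 1 N).inf' h (fun k => distNearestInt ((Nat.fib k : ℝ) * α))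
  else 0

namespace DNaux

/-- Lucas numbers. -/
def luc : ℕ → ℕ
  | 0 => 2
  | 1 => 1
  | n + 2 => luc (n + 1) + luc n

@[simp] lemma luc_zero : luc 0 = 2 := rfl
@[simp] lemma luc_one : luc 1 = 1 := rfl
lemma luc_add_two (n : ℕ) : luc (n + 2) = luc (n + 1) + luc n := rfl

noncomputable def ss : ℝ := Real.sqrt 5

lemma ss_sq : ss ^ 2 = 5 := Real.sq_sqrt (by norm_num)

lemma ss_lb : 2.236 < ss := by
  have := Real.lt_sqrt (x := 2.236) (y := 5) (by norm_num)
  rw [ss]; exact this.mpr (by norm_num)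

lemma ss_ub : ss < 2.2361 := by
  have := Real.sqrt_lt' (x := 5) (y := 2.2361) (by norm_num)
  rw [ss]; exact this.mpr (by norm_num)

/-- Identity: √5 · F_k = L_k − 2ψ^k with ψ = (1−√5)/2 = −(√5−1)/2.  -/
lemma key_id : ∀ k : ℕ, ss * Nat.fib k = (luc k : ℝ) - 2 * (-((ss - 1)/2)) ^ k := by
  have h5 : ss ^ 2 = 5 := ss_sq
  have main : ∀ k : ℕ, (ss * Nat.fib k = (luc k : ℝ) - 2 * (-((ss - 1)/2)) ^ k)
      ∧ (ss * Nat.fib (k+1) = (luc (k+1) : ℝ) - 2 * (-((ss - 1)/2)) ^ (k+1)) := by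
    intro k
    induction k with
    | zero => constructor <;> simp <;> ring
    | succ n ih =>
      refine ⟨ih.2, ?_⟩
      have h1 := ih.1
      have h2 := ih.2
      have hf : (Nat.fib (n+2) : ℝ) = Nat.fib (n+1) + Nat.fib n := by
        rw [Nat.fib_add_two]; push_cast; ring
      have hl : (luc (n+2) : ℝ) = luc (n+1) + luc n := by
        rw [luc_add_two]; push_cast; ring
      have hpow : (-((ss - 1)/2)) ^ (n+2) = (-((ss - 1)/2)) ^ (n+1) + (-((ss - 1)/2)) ^ n := by
        have : (-((ss - 1)/2)) ^ (n+2) = (-((ss - 1)/2)) ^ n * (-((ss - 1)/2))^2 := by ring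
        rw [this]
        have hsq : (-((ss - 1)/2))^2 = (-((ss - 1)/2)) + 1 := by nlinarith [h5]
        rw [hsq]; ring
      rw [hf, hl, hpow]; nlinarith [h1, h2]
  exact fun k => (main k).1

/-- Integer sequence X_k = 5 F_k − L_k ; residues mod 10 follow period 4 pattern 8,4,2,6. -/
def X (k : ℕ) : ℤ := 5 * Nat.fib k - luc k

lemma X_mod : ∀ k : ℕ,
    (k % 4 = 0 → X k % 10 = 8) ∧ (k % 4 = 1 → X k % 10 = 4) ∧
    (k % 4 = 2 → X k % 10 = 2) ∧ (k % 4 = 3 → X k % 10 = 6) := by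
  have hrec : ∀ k, X (k+2) = X (k+1) + X k := by
    intro k
    simp only [X, Nat.fib_add_two, luc_add_two]
    push_cast; ring
  have main : ∀ k : ℕ,
      ((k % 4 = 0 → X k % 10 = 8) ∧ (k % 4 = 1 → X k % 10 = 4) ∧
       (k % 4 = 2 → X k % 10 = 2) ∧ (k % 4 = 3 → X k % 10 = 6)) ∧
      (((k+1) % 4 = 0 → X (k+1) % 10 = 8) ∧ ((k+1) % 4 = 1 → X (k+1) % 10 = 4) ∧
       ((k+1) % 4 = 2 → X (k+1) % 10 = 2) ∧ ((k+1) % 4 = 3 → X (k+1) % 10 = 6)) := by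
    intro k
    induction k with
    | zero => refine ⟨?_, ?_⟩ <;> simp [X] <;> decide
    | succ n ih =>
      refine ⟨ih.2, ?_⟩
      have h2 := hrec n
      rcases ih with ⟨⟨a0, a1, a2, a3⟩, ⟨b0, b1, b2, b3⟩⟩
      rw [show n+1+1 = n+2 from rfl]
      have hn : n % 4 = 0 ∨ n % 4 = 1 ∨ n % 4 = 2 ∨ n % 4 = 3 := by omega
      rcases hn with h | h | h | h
      · have := a0 h; have := b1 (by omega); omega
      · have := a1 h; have := b2 (by omega); omega
      · have := a2 h; have := b3 (by omega); omega
      · have := a3 h; have := b0 (by omega); omega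
  exact fun k => (main k).1

lemma fib_ratio : ∀ j : ℕ, 8 * Nat.fib (j + 10) ≤ 55 * Nat.fib (j + 6) := by
  have main : ∀ j : ℕ, 8 * Nat.fib (j + 10) ≤ 55 * Nat.fib (j + 6) ∧
      8 * Nat.fib (j + 11) ≤ 55 * Nat.fib (j + 7) := by
    intro j
    induction j with
    | zero => constructor <;> simp [Nat.fib] <;> decide
    | succ n ih =>
      refine ⟨ih.2, ?_⟩
      have e1 : n + 1 + 11 = (n + 11) + 1 := by ring
      have h1 : Nat.fib (n + 12) = Nat.fib (n + 11) + Nat.fib (n + 10) := by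
        rw [show n + 12 = (n+10)+2 by ring, Nat.fib_add_two]; ring
      have h2 : Nat.fib (n + 8) = Nat.fib (n + 7) + Nat.fib (n + 6) := by
        rw [show n + 8 = (n+6)+2 by ring, Nat.fib_add_two]; ring
      have := ih.1; have := ih.2
      rw [show n + 1 + 11 = n + 12 by ring, show n + 1 + 7 = n + 8 by ring, h1, h2]
      omega
  exact fun j => (main j).1

lemma le_fib_add_two : ∀ m : ℕ, m ≤ Nat.fib (m + 2) := by
  intro m
  induction m with
  | zero => simp
  | succ n ih =>
    rw [show n+1+2 = n+3 from rfl]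
    have h1 : Nat.fib (n + 3) = Nat.fib (n + 2) + Nat.fib (n + 1) := by
      rw [show n + 3 = (n+1)+2 by ring, Nat.fib_add_two]; ring
    have h2 : 1 ≤ Nat.fib (n + 1) := Nat.fib_pos.mpr (by omega)
    omega

/-- distNearestInt is at most the distance to any integer. -/
lemma dni_le (x : ℝ) (m : ℤ) : distNearestInt x ≤ |x - m| := by
  unfold distNearestInt
  rcases eq_or_ne m (round x) with h | h
  · rw [h]
  · have h1 : |x - round x| ≤ 1/2 := abs_sub_round x
    have hz : (0:ℤ) < |m - round x| := abs_pos.mpr (sub_ne_zero.mpr h)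
    have h4 : (1:ℝ) ≤ |(m:ℝ) - round x| := by
      have h4' : (1:ℤ) ≤ |m - round x| := by omega
      have : ((|m - round x| : ℤ) : ℝ) = |(m:ℝ) - round x| := by push_cast; ring_nf
      calc (1:ℝ) = ((1:ℤ):ℝ) := by norm_num
        _ ≤ ((|m - round x| : ℤ) : ℝ) := by exact_mod_cast h4'
        _ = |(m:ℝ) - round x| := this
    have h5 : |(m:ℝ) - round x| ≤ |x - m| + |x - round x| := by
      calc |(m:ℝ) - round x| = |((m:ℝ) - x) + (x - round x)| := by ring_nf
        _ ≤ |(m:ℝ) - x| + |x - round x| := abs_add_le _ _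
        _ = |x - m| + |x - round x| := by rw [abs_sub_comm]
    linarith

lemma a_pow_le (j k : ℕ) (h : j ≤ k) : ((ss-1)/2)^k ≤ ((ss-1)/2)^j := by
  have h1 := ss_lb; have h2 := ss_ub
  exact pow_le_pow_of_le_one (by nlinarith) (by nlinarith) h

lemma a_pow_pos (k : ℕ) : 0 < ((ss-1)/2)^k := by
  have h1 := ss_lb
  exact pow_pos (by nlinarith) k

lemma a_sq : ((ss-1)/2)^2 = (3 - ss)/2 := by linear_combination ss_sq / 4
lemma a_cube : ((ss-1)/2)^3 = ss - 2 := by linear_combination ((ss - 3)/8) * ss_sq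
lemma a_four : ((ss-1)/2)^4 = (7 - 3*ss)/2 := by
  linear_combination ((ss^2 - 4*ss + 11)/16) * ss_sq

set_option maxHeartbeats 2000000 in
/-- The key lower-bound estimate. -/
lemma lower_aux (k : ℕ) (hk : 1 ≤ k) (m : ℤ) :
    (3*ss - 5)/10 ≤ |(Nat.fib k : ℝ) * ((5 - ss)/10) - m| := by
  have hs5 := ss_sq; have hl := ss_lb; have hu := ss_ub
  set a : ℝ := (ss - 1)/2 with ha
  have hkey := key_id k
  have hXr : ((X k : ℤ):ℝ) = 5*(Nat.fib k : ℝ) - (luc k : ℝ) := by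
    simp only [X]; push_cast; ring
  have hval : (Nat.fib k : ℝ) * ((5 - ss)/10) - m
      = (((X k - 10*m : ℤ) : ℝ) + 2*(-a)^k)/10 := by
    push_cast
    rw [hXr]
    linear_combination (Nat.fib k : ℝ) * 0 - hkey/10
  rw [hval]
  set w : ℤ := X k - 10*m with hw
  have habs : |(((w : ℤ):ℝ) + 2*(-a)^k)/10| = |((w : ℤ):ℝ) + 2*(-a)^k|/10 := by
    rw [abs_div]; norm_num
  rw [habs]
  rw [div_le_div_iff_of_pos_right (by norm_num : (0:ℝ) < 10)]
  -- now goal : 3*ss - 5 ≤ |(w:ℝ) + 2*(-a)^k|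
  have hX := X_mod k
  have h4 : k % 4 = 0 ∨ k % 4 = 1 ∨ k % 4 = 2 ∨ k % 4 = 3 := by omega
  rcases h4 with h | h | h | h
  · -- k ≡ 0 mod 4, k ≥ 4, even
    have hwm : w % 10 = 8 := by have := hX.1 h; omega
    have hev : Even k := Nat.even_iff.mpr (by omega)
    have hp : (-a)^k = a^k := Even.neg_pow hev a
    have hb : a^k ≤ (7 - 3*ss)/2 := by rw [← a_four]; exact a_pow_le 4 k (by omega)
    have hpos : 0 < a^k := a_pow_pos k
    have hcase : w = -2 ∨ 8 ≤ w ∨ w ≤ -12 := by omega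
    rw [hp]
    rcases hcase with h' | h' | h'
    · have : ((w:ℤ):ℝ) = -2 := by rw [h']; norm_num
      rw [this]; rw [abs_of_nonpos (by nlinarith)]; nlinarith
    · have : (8:ℝ) ≤ ((w:ℤ):ℝ) := by exact_mod_cast h'
      rw [abs_of_nonneg (by nlinarith)]; nlinarith
    · have : ((w:ℤ):ℝ) ≤ -12 := by exact_mod_cast h'
      rw [abs_of_nonpos (by nlinarith)]; nlinarith
  · -- k ≡ 1 mod 4, odd
    have hwm : w % 10 = 4 := by have := hX.2.1 h; omega
    have hod : Odd k := Nat.odd_iff.mpr (by omega)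
    have hp : (-a)^k = -(a^k) := Odd.neg_pow hod a
    have hb : a^k ≤ a := by
      have := a_pow_le 1 k (by omega); simpa using this
    have hpos : 0 < a^k := a_pow_pos k
    have hcase : 4 ≤ w ∨ w ≤ -6 := by omega
    rw [hp]
    rcases hcase with h' | h'
    · have : (4:ℝ) ≤ ((w:ℤ):ℝ) := by exact_mod_cast h'
      rw [abs_of_nonneg (by nlinarith)]; nlinarith
    · have : ((w:ℤ):ℝ) ≤ -6 := by exact_mod_cast h'
      rw [abs_of_nonpos (by nlinarith)]; nlinarith
  · -- k ≡ 2 mod 4, even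
    have hwm : w % 10 = 2 := by have := hX.2.2.1 h; omega
    have hev : Even k := Nat.even_iff.mpr (by omega)
    have hp : (-a)^k = a^k := Even.neg_pow hev a
    have hb : a^k ≤ (3 - ss)/2 := by rw [← a_sq]; exact a_pow_le 2 k (by omega)
    have hpos : 0 < a^k := a_pow_pos k
    have hcase : w = 2 ∨ 12 ≤ w ∨ w ≤ -8 := by omega
    rw [hp]
    rcases hcase with h' | h' | h'
    · have : ((w:ℤ):ℝ) = 2 := by rw [h']; norm_num
      rw [this]; rw [abs_of_nonneg (by nlinarith)]; nlinarith
    · have : (12:ℝ) ≤ ((w:ℤ):ℝ) := by exact_mod_cast h'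
      rw [abs_of_nonneg (by nlinarith)]; nlinarith
    · have : ((w:ℤ):ℝ) ≤ -8 := by exact_mod_cast h'
      rw [abs_of_nonpos (by nlinarith)]; nlinarith
  · -- k ≡ 3 mod 4, odd, k ≥ 3
    have hwm : w % 10 = 6 := by have := hX.2.2.2 h; omega
    have hod : Odd k := Nat.odd_iff.mpr (by omega)
    have hp : (-a)^k = -(a^k) := Odd.neg_pow hod a
    have hb : a^k ≤ ss - 2 := by rw [← a_cube]; exact a_pow_le 3 k (by omega)
    have hpos : 0 < a^k := a_pow_pos k
    have hcase : w = 6 ∨ w = -4 ∨ 16 ≤ w ∨ w ≤ -14 := by omega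
    rw [hp]
    rcases hcase with h' | h' | h' | h'
    · have : ((w:ℤ):ℝ) = 6 := by rw [h']; norm_num
      rw [this]; rw [abs_of_nonneg (by nlinarith)]; nlinarith
    · have : ((w:ℤ):ℝ) = -4 := by rw [h']; norm_num
      rw [this]; rw [abs_of_nonpos (by nlinarith)]; nlinarith
    · have : (16:ℝ) ≤ ((w:ℤ):ℝ) := by exact_mod_cast h'
      rw [abs_of_nonneg (by nlinarith)]; nlinarith
    · have : ((w:ℤ):ℝ) ≤ -14 := by exact_mod_cast h'
      rw [abs_of_nonpos (by nlinarith)]; nlinarith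

lemma minFib_lower (N : ℕ) (hN : 1 ≤ N) :
    (3*ss - 5)/10 ≤ minFib N ((5 - ss)/10) := by
  have hne : (Finset.Icc 1 N).Nonempty := ⟨1, by simp [Finset.mem_Icc]; omega⟩
  unfold minFib
  rw [dif_pos hne]
  apply Finset.le_inf' hne
  intro k hk
  rw [Finset.mem_Icc] at hk
  unfold distNearestInt
  exact lower_aux k hk.1 (round ((Nat.fib k : ℝ) * ((5 - ss)/10)))

lemma a_six : ((ss-1)/2)^6 = 9 - 4*ss := by
  rw [show (6:ℕ) = 3*2 from rfl, pow_mul, a_cube]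
  linear_combination ss_sq

lemma dni_add_int (x : ℝ) (m : ℤ) : distNearestInt (x + m) = distNearestInt x := by
  apply le_antisymm
  · calc distNearestInt (x + m) ≤ |x + m - ((round x + m : ℤ):ℝ)| := dni_le _ _
      _ = |x - round x| := by push_cast; ring_nf
      _ = distNearestInt x := rfl
  · calc distNearestInt x ≤ |x - ((round (x + (m:ℝ)) - m : ℤ):ℝ)| := dni_le _ _
      _ = |x + m - round (x + (m:ℝ))| := by push_cast; ring_nf
      _ = distNearestInt (x + m) := rfl

lemma dni_neg (x : ℝ) : distNearestInt (-x) = distNearestInt x := by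
  apply le_antisymm
  · calc distNearestInt (-x) ≤ |(-x) - ((-(round x) : ℤ):ℝ)| := dni_le _ _
      _ = |x - round x| := by push_cast; rw [← abs_neg]; ring_nf
      _ = distNearestInt x := rfl
  · calc distNearestInt x ≤ |x - ((-(round (-x)) : ℤ):ℝ)| := dni_le _ _
      _ = |(-x) - round (-x)| := by push_cast; rw [← abs_neg]; ring_nf
      _ = distNearestInt (-x) := rfl

lemma dni_fib_reduce (k : ℕ) (α : ℝ) :
    distNearestInt ((Nat.fib k : ℝ) * α) = distNearestInt ((Nat.fib k : ℝ) * |α - round α|) := by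
  set u := α - round α with hu
  have hsplit : (Nat.fib k : ℝ) * α = (Nat.fib k : ℝ) * u + ((Nat.fib k * round α : ℤ):ℝ) := by
    push_cast; rw [hu]; ring
  rw [hsplit, dni_add_int]
  rcases abs_cases u with ⟨h1, _⟩ | ⟨h1, _⟩
  · rw [h1]
  · rw [h1, show (Nat.fib k : ℝ) * (-u) = -((Nat.fib k:ℝ) * u) from by ring, dni_neg]

lemma minFib_le (N k : ℕ) (hk1 : 1 ≤ k) (hkN : k ≤ N) (α : ℝ) :
    minFib N α ≤ distNearestInt ((Nat.fib k : ℝ) * α) := by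
  have hne : (Finset.Icc 1 N).Nonempty := ⟨1, by simp [Finset.mem_Icc]; omega⟩
  unfold minFib
  rw [dif_pos hne]
  exact Finset.inf'_le _ (Finset.mem_Icc.mpr ⟨hk1, hkN⟩)

set_option maxHeartbeats 1000000 in
/-- Main quantitative upper bound. -/
lemma upper (n : ℕ) (hn : 10 ≤ n) (α : ℝ) :
    minFib n α ≤ (3*ss - 5)/10 + 1/((n:ℝ) - 5) := by
  have hs5 := ss_sq; have hl := ss_lb; have hu := ss_ub
  by_contra hcon
  push_neg at hcon
  obtain ⟨c, hc⟩ : ∃ c, c = minFib n α := ⟨_, rfl⟩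
  obtain ⟨t, ht⟩ : ∃ t, t = |α - round α| := ⟨_, rfl⟩
  rw [← hc] at hcon
  have hnR : (5:ℝ) < (n:ℝ) := by
    have : (10:ℝ) ≤ (n:ℝ) := by exact_mod_cast hn
    linarith
  have hrecip_pos : 0 < 1/((n:ℝ) - 5) := one_div_pos.mpr (by linarith)
  have hc_star : (3*ss - 5)/10 < c := by linarith
  have hconstraint : ∀ k : ℕ, 1 ≤ k → k ≤ n → ∀ m : ℤ, c ≤ |(Nat.fib k : ℝ) * t - m| := by
    intro k hk1 hkn m
    calc c ≤ distNearestInt ((Nat.fib k : ℝ) * α) := hc ▸ minFib_le n k hk1 hkn α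
      _ = distNearestInt ((Nat.fib k : ℝ) * t) := by rw [ht]; exact dni_fib_reduce k α
      _ ≤ |(Nat.fib k : ℝ) * t - m| := dni_le _ _
  have ht_le : t ≤ 1/2 := ht ▸ abs_sub_round α
  have ht_nonneg : 0 ≤ t := ht ▸ abs_nonneg _
  have ht_ge : c ≤ t := by
    have h := hconstraint 1 (by omega) (by omega) 0
    have e1 : |(Nat.fib 1 : ℝ) * t - ((0:ℤ):ℝ)| = t := by
      rw [ht]; simp [Nat.fib_one, abs_of_nonneg (abs_nonneg (α - round α))]
    rwa [e1] at h
  have hf3 : (Nat.fib 3 : ℝ) = 2 := by norm_num [Nat.fib]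
  have hf4 : (Nat.fib 4 : ℝ) = 3 := by norm_num [Nat.fib]
  have hf5 : (Nat.fib 5 : ℝ) = 5 := by norm_num [Nat.fib]
  have hf6 : (Nat.fib 6 : ℝ) = 8 := by norm_num [Nat.fib]
  rcases le_or_gt t (1/4) with hA | hBC
  · -- Case A : t ≤ 1/4 ; kill with k = 5 or k = 6
    rcases le_or_gt t (117/500) with hA1 | hA2
    · have h5 := hconstraint 5 (by omega) (by omega) 1
      rw [hf5] at h5
      push_cast at h5
      rcases abs_cases ((5:ℝ) * t - 1) with ⟨he, _⟩ | ⟨he, _⟩ <;> rw [he] at h5 <;> linarith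
    · have h6 := hconstraint 6 (by omega) (by omega) 2
      rw [hf6] at h6
      push_cast at h6
      rcases abs_cases ((8:ℝ) * t - 2) with ⟨he, _⟩ | ⟨he, _⟩ <;> rw [he] at h6 <;> linarith
  · -- t > 1/4
    have h3 := hconstraint 3 (by omega) (by omega) 1
    rw [hf3] at h3; push_cast at h3
    have hB1 : c ≤ 1 - 2*t := by
      rcases abs_cases ((2:ℝ) * t - 1) with ⟨he, _⟩ | ⟨he, _⟩ <;> rw [he] at h3 <;> linarith
    have h4 := hconstraint 4 (by omega) (by omega) 1
    rw [hf4] at h4; push_cast at h4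
    rcases abs_cases ((3:ℝ) * t - 1) with ⟨he, _⟩ | ⟨he, _⟩
    · -- Case B : 3t - 1 ≥ c ; kill with k = 5, m = 2
      rw [he] at h4
      have h5 := hconstraint 5 (by omega) (by omega) 2
      rw [hf5] at h5; push_cast at h5
      rcases abs_cases ((5:ℝ) * t - 2) with ⟨he2, _⟩ | ⟨he2, _⟩ <;> rw [he2] at h5 <;> linarith
    · -- Case C : 1 - 3t ≥ c
      rw [he] at h4
      obtain ⟨e, he_def⟩ : ∃ e, e = (5 - ss)/10 - t := ⟨_, rfl⟩
      have he_pos : 0 < e := by rw [he_def]; linarith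
      have he_le : e ≤ (5 - ss)/10 - c := by rw [he_def]; linarith
      -- slot k = 5
      have hG5 : 5 * e ≤ (3 - ss)/2 - c := by
        have h5 := hconstraint 5 (by omega) (by omega) 1
        rw [hf5] at h5; push_cast at h5
        have hv : (5:ℝ)*t - 1 = (3 - ss)/2 - 5*e := by rw [he_def]; ring
        rw [hv] at h5
        rcases abs_cases ((3 - ss)/2 - 5*e) with ⟨he2, _⟩ | ⟨he2, _⟩ <;> rw [he2] at h5 <;>
          linarith
      -- slot k = 6
      have hG6 : (Nat.fib 6 : ℝ) * e ≤ (1 + ((ss-1)/2)^6)/5 - c := by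
        rw [hf6, a_six]
        have h6 := hconstraint 6 (by omega) (by omega) 2
        rw [hf6] at h6; push_cast at h6
        have hv : (8:ℝ)*t - 2 = (1 + (9 - 4*ss))/5 - 8*e := by
          rw [he_def]; ring
        rw [hv] at h6
        rcases abs_cases ((1 + (9 - 4*ss))/5 - 8*e) with ⟨he2, _⟩ | ⟨he2, _⟩ <;> rw [he2] at h6 <;>
          linarith
      -- the chain
      have chain : ∀ j : ℕ, 4*j + 6 ≤ n →
          (Nat.fib (4*j + 6) : ℝ) * e ≤ (1 + ((ss-1)/2)^(4*j + 6))/5 - c := by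
        intro j
        induction j with
        | zero => intro _; simpa using hG6
        | succ i ih =>
          intro hle
          have hle' : 4*i + 6 ≤ n := by omega
          have ihv := ih hle'
          set k : ℕ := 4*i + 6 with hk_def
          have hk' : 4*(i+1) + 6 = k + 4 := by omega
          rw [hk']
          have hX2 : X (k+4) % 10 = 2 := (X_mod (k+4)).2.2.1 (by omega)
          obtain ⟨mI, hmI⟩ : ∃ mI : ℤ, X (k+4) - 2 = 10 * mI := ⟨(X (k+4) - 2)/10, by omega⟩
          have hev : Even (k+4) := Nat.even_iff.mpr (by omega)
          have hkey := key_id (k+4)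
          rw [Even.neg_pow hev] at hkey
          have hXr : ((X (k+4) : ℤ):ℝ) = 5*(Nat.fib (k+4) : ℝ) - (luc (k+4) : ℝ) := by
            simp only [X]; push_cast; ring
          have hmIr : ((mI:ℤ):ℝ) = (5*(Nat.fib (k+4) : ℝ) - (luc (k+4) : ℝ) - 2)/10 := by
            have hcast : ((X (k+4) : ℤ):ℝ) - 2 = 10 * ((mI:ℤ):ℝ) := by exact_mod_cast hmI
            rw [hXr] at hcast; linarith
          have htv : t = (5 - ss)/10 - e := by rw [he_def]; ring
          have hslot : (Nat.fib (k+4) : ℝ) * t - mI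
              = (1 + ((ss-1)/2)^(k+4))/5 - (Nat.fib (k+4):ℝ) * e := by
            rw [htv, hmIr]
            linear_combination (-(1:ℝ)/10) * hkey
          have hratio : 8 * (Nat.fib (k+4) : ℝ) ≤ 55 * (Nat.fib k : ℝ) := by
            have hr := fib_ratio (4*i)
            rw [show 4*i + 10 = k + 4 by omega, show 4*i + 6 = k by omega] at hr
            exact_mod_cast hr
          have hak : ((ss-1)/2)^k ≤ 9 - 4*ss := by
            rw [← a_six]; exact a_pow_le 6 k (by omega)
          have hak4 : 0 < ((ss-1)/2)^(k+4) := a_pow_pos (k+4)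
          have hfk4e : (Nat.fib (k+4) : ℝ) * e ≤ (55/8) * ((10 - 4*ss)/5 - c) := by
            have h1 := mul_le_mul_of_nonneg_right hratio he_pos.le
            have h2 : (Nat.fib k : ℝ) * e ≤ (10 - 4*ss)/5 - c := by linarith
            have h3 := mul_le_mul_of_nonneg_left h2 (by norm_num : (0:ℝ) ≤ 55/8)
            linarith
          have hexcl : -c < (1 + ((ss-1)/2)^(k+4))/5 - (Nat.fib (k+4):ℝ) * e := by
            linarith [hfk4e, hak4, hc_star, hl]
          have hcons := hconstraint (k+4) (by omega) (by omega) mI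
          rw [hslot] at hcons
          rcases abs_cases ((1 + ((ss-1)/2)^(k+4))/5 - (Nat.fib (k+4):ℝ) * e)
            with ⟨he2, _⟩ | ⟨he2, _⟩ <;> rw [he2] at hcons
          · linarith
          · linarith
      -- conclude
      obtain ⟨j, hj1, hj2⟩ : ∃ j : ℕ, 4*j + 6 ≤ n ∧ n ≤ 4*j + 9 := ⟨(n - 6)/4, by omega, by omega⟩
      have hK := chain j hj1
      set K : ℕ := 4*j + 6 with hK_def
      have haK : ((ss-1)/2)^K ≤ (3 - ss)/2 := by
        rw [← a_sq]; exact a_pow_le 2 K (by omega)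
      have hfibK_pos : (0:ℝ) < (Nat.fib K : ℝ) := by
        exact_mod_cast Nat.fib_pos.mpr (by omega)
      have hKe : (Nat.fib K : ℝ) * e ≤ (5 - ss)/10 := by linarith
      have hfibK_ge : (n:ℝ) - 5 ≤ (Nat.fib K : ℝ) := by
        have h1 : n - 5 ≤ Nat.fib (n - 3) := by
          have h0 := le_fib_add_two (n - 5)
          rwa [show n - 5 + 2 = n - 3 by omega] at h0
        have h2 : Nat.fib (n-3) ≤ Nat.fib K := Nat.fib_mono (by omega)
        have h3 : ((n - 5 : ℕ):ℝ) ≤ (Nat.fib K : ℝ) := by exact_mod_cast le_trans h1 h2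
        have hcast : ((n - 5 : ℕ):ℝ) = (n:ℝ) - 5 := by
          have h5n : (5:ℕ) ≤ n := by omega
          push_cast [h5n]; ring
        linarith
      have he_small : 3 * e ≤ 1/((n:ℝ) - 5) := by
        have h1 : 3*e*(Nat.fib K : ℝ) ≤ 1 := by nlinarith [hKe, hl]
        have h2 : 3*e ≤ 1/(Nat.fib K : ℝ) := by
          rw [le_div_iff₀ hfibK_pos]; linarith
        have h3 : 1/(Nat.fib K : ℝ) ≤ 1/((n:ℝ) - 5) :=
          one_div_le_one_div_of_le (by linarith) hfibK_ge
        linarith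
      have hfinal : c ≤ (3*ss - 5)/10 + 3*e := by
        have hid : 1 - 3*t = (3*ss - 5)/10 + 3*e := by rw [he_def]; ring
        linarith
      linarith

lemma cstar_nonneg : 0 ≤ (3*ss - 5)/10 := by have := ss_lb; linarith

lemma bddAbove_S (N : ℕ) (hN : 1 ≤ N) : BddAbove {y : ℝ | ∃ α : ℝ, y = minFib N α} := by
  refine ⟨1/2, fun y hy => ?_⟩
  obtain ⟨α, rfl⟩ := hy
  calc minFib N α ≤ distNearestInt ((Nat.fib 1 : ℝ) * α) := minFib_le N 1 le_rfl hN α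
    _ ≤ 1/2 := by
        have h1 : ((Nat.fib 1 : ℝ)) * α = α := by norm_num
        rw [h1]; exact abs_sub_round α

end DNaux

theorem d_N_tendsto :
    Filter.Tendsto (fun N : ℕ => sSup {y : ℝ | ∃ α : ℝ, y = minFib N α})
      Filter.atTop (nhds ((φ - 1) / (φ + 2))) := by
  have hs5 := DNaux.ss_sq
  have hl := DNaux.ss_lb
  have hφ : (φ - 1) / (φ + 2) = (3*DNaux.ss - 5)/10 := by
    have h1 : φ = (1 + DNaux.ss)/2 := rfl
    rw [h1]
    rw [div_eq_div_iff (by nlinarith) (by norm_num)]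
    nlinarith [hs5]
  rw [hφ]
  apply tendsto_of_tendsto_of_tendsto_of_le_of_le'
    (g := fun _ : ℕ => (3*DNaux.ss - 5)/10)
    (h := fun N : ℕ => (3*DNaux.ss - 5)/10 + 1/((N:ℝ) - 5))
  · exact tendsto_const_nhds
  · have t1 : Filter.Tendsto (fun N : ℕ => (N:ℝ) - 5) Filter.atTop Filter.atTop := by
      have := tendsto_natCast_atTop_atTop (R := ℝ)
      exact Filter.tendsto_atTop_add_const_right _ (-5) this
    have t2 : Filter.Tendsto (fun N : ℕ => 1/((N:ℝ) - 5)) Filter.atTop (nhds 0) := by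
      simpa [one_div, Function.comp_def] using tendsto_inv_atTop_zero.comp t1
    have h3 : Filter.Tendsto (fun _ : ℕ => (3*DNaux.ss - 5)/10) Filter.atTop
        (nhds ((3*DNaux.ss - 5)/10)) := tendsto_const_nhds
    simpa using h3.add t2
  · filter_upwards [Filter.eventually_ge_atTop 1] with N hN
    exact le_trans (DNaux.minFib_lower N hN)
      (le_csSup (DNaux.bddAbove_S N hN) ⟨(5 - DNaux.ss)/10, rfl⟩)
  · filter_upwards [Filter.eventually_ge_atTop 10] with N hN
    apply Real.sSup_le
    · rintro y ⟨α, rfl⟩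
      exact DNaux.upper N hN α
    · have : (0:ℝ) < 1/((N:ℝ) - 5) := by
        have h10 : (10:ℝ) ≤ (N:ℝ) := by exact_mod_cast hN
        apply one_div_pos.mpr; linarith
      linarith [DNaux.cstar_nonneg]
end

section
/- Let α₁ = 1/(φ+2). For every integer N ≥ 4, min_{1 ≤ n ≤ N} ‖F_n α₁‖ = (φ−1)/(φ+2). -/
noncomputable def ψ : ℝ := (1 - Real.sqrt 5) / 2

/-- Lucas numbers -/
def Luc : ℕ → ℕ
  | 0 => 2
  | 1 => 1
  | n + 2 => Luc n + Luc (n + 1)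

lemma sqrt5_sq : Real.sqrt 5 ^ 2 = 5 := Real.sq_sqrt (by norm_num)

lemma sqrt5_lt : Real.sqrt 5 < 2.24 := by
  nlinarith [sqrt5_sq, Real.sqrt_nonneg 5]

lemma sqrt5_gt : 2.23 < Real.sqrt 5 := by
  nlinarith [sqrt5_sq, Real.sqrt_nonneg 5]

lemma psi_sq : ψ ^ 2 = ψ + 1 := by
  unfold ψ; nlinarith [sqrt5_sq]

lemma psi_neg : ψ < 0 := by unfold ψ; nlinarith [sqrt5_gt]

lemma psi_abs : |ψ| < 0.62 := by
  rw [abs_of_neg psi_neg]; unfold ψ; nlinarith [sqrt5_lt]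

lemma phi2_pos : (0:ℝ) < φ + 2 := by unfold φ; nlinarith [sqrt5_gt]

lemma key : ∀ n : ℕ, 5 * (Nat.fib (n+1) : ℝ) = ((Luc n : ℝ) + ψ^(n+1)) * (φ + 2) := by
  intro n
  induction n using Nat.twoStepInduction with
  | zero =>
    show 5 * ((Nat.fib 1 : ℕ) : ℝ) = ((Luc 0 : ℕ) + ψ^1) * (φ + 2)
    rw [show Nat.fib 1 = 1 from rfl, show Luc 0 = 2 from rfl]
    push_cast
    unfold φ ψ; nlinarith [sqrt5_sq]
  | one =>
    show 5 * ((Nat.fib 2 : ℕ) : ℝ) = ((Luc 1 : ℕ) + ψ^2) * (φ + 2)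
    rw [show Nat.fib 2 = 1 from rfl, show Luc 1 = 1 from rfl, psi_sq]
    push_cast
    unfold φ ψ; nlinarith [sqrt5_sq]
  | more n ih1 ih2 =>
    have hf : (Nat.fib (n+3) : ℝ) = Nat.fib (n+1) + Nat.fib (n+2) := by
      rw [Nat.fib_add_two]; push_cast; ring
    have hl : (Luc (n+2) : ℝ) = Luc n + Luc (n+1) := by
      show ((Luc n + Luc (n+1) : ℕ) : ℝ) = _ ; push_cast; ring
    have hp : ψ^(n+3) = ψ^(n+1) + ψ^(n+2) := by
      have : ψ^(n+3) = ψ^(n+1) * ψ^2 := by ring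
      rw [this, psi_sq]; ring
    rw [hf, hl, hp]; nlinarith [ih1, ih2]

lemma Luc_period : ∀ n : ℕ, Luc (n + 4) % 5 = Luc n % 5 := by
  intro n
  induction n using Nat.twoStepInduction with
  | zero => decide
  | one => decide
  | more n ih1 ih2 =>
    have : Luc (n + 6) = Luc (n + 4) + Luc (n + 5) := rfl
    rw [this, show Luc (n+2) = Luc n + Luc (n+1) from rfl, Nat.add_mod, ih1, ih2, ← Nat.add_mod]

lemma Luc_mod : ∀ n : ℕ, Luc n % 5 = Luc (n % 4) % 5 := by
  intro n
  induction n using Nat.strong_induction_on with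
  | _ n ih =>
    by_cases h : n < 4
    · rw [Nat.mod_eq_of_lt h]
    · obtain ⟨m, rfl⟩ : ∃ m, n = m + 4 := ⟨n - 4, by omega⟩
      rw [Luc_period, ih m (by omega), show (m+4) % 4 = m % 4 by omega]

lemma psi_lt : ψ < -0.61 := by unfold ψ; nlinarith [sqrt5_gt]

lemma psi4_eq : ψ ^ 4 = 3 * ψ + 2 := by linear_combination (ψ^2 + ψ + 2) * psi_sq

lemma psi4_pos : 0 < ψ ^ 4 := by
  have h : -ψ < 0.62 := by have h' := psi_abs; rwa [abs_of_neg psi_neg] at h'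
  rw [psi4_eq]; linarith

lemma psi4_lt : ψ ^ 4 < 1 := by rw [psi4_eq]; linarith [psi_lt]

lemma lower (m : ℕ) :
    (1 - ψ^4)/5 ≤ distNearestInt ((Nat.fib (m+1) : ℝ) * (1/(φ+2))) := by
  have h2 : (φ + 2) ≠ 0 := ne_of_gt phi2_pos
  set x : ℝ := (Nat.fib (m+1) : ℝ) * (1/(φ+2)) with hxdef
  have hx : x = ((Luc m : ℝ) + ψ^(m+1))/5 := by
    rw [hxdef, eq_div_iff (by norm_num : (5:ℝ) ≠ 0)]
    field_simp
    linarith [key m]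
  set z : ℤ := round x with hz
  set k : ℤ := (Luc m : ℤ) - 5*z with hkdef
  have hsub : x - (z:ℝ) = ((k:ℝ) + ψ^(m+1))/5 := by
    rw [hx, hkdef]; push_cast; ring
  have habs : distNearestInt x = |(k:ℝ) + ψ^(m+1)|/5 := by
    rw [distNearestInt, hsub, abs_div]; norm_num
  rw [habs]
  gcongr
  -- now: 1 - ψ^4 ≤ |(k:ℝ) + ψ^(m+1)|
  have hψ1 : |ψ| ≤ 1 := by linarith [psi_abs]
  have h62 : |ψ^(m+1)| < 0.62 := by
    rw [abs_pow]
    calc |ψ|^(m+1) ≤ |ψ|^1 :=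
          pow_le_pow_of_le_one (abs_nonneg ψ) hψ1 (by omega)
      _ = |ψ| := pow_one _
      _ < 0.62 := psi_abs
  obtain ⟨he1, he2⟩ := abs_lt.1 h62
  have hp4 := psi4_pos
  have hp41 := psi4_lt
  have big : ∀ j : ℤ, (j ≤ -2 ∨ 2 ≤ j) → 1 - ψ^4 ≤ |(j:ℝ) + ψ^(m+1)| := by
    intro j hj
    rcases hj with hj | hj
    · have hj' : (j:ℝ) ≤ -2 := by exact_mod_cast hj
      refine le_abs.2 (Or.inr ?_); linarith
    · have hj' : (2:ℝ) ≤ (j:ℝ) := by exact_mod_cast hj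
      refine le_abs.2 (Or.inl ?_); linarith
  have hm : m % 4 = 0 ∨ m % 4 = 1 ∨ m % 4 = 2 ∨ m % 4 = 3 := by omega
  have hLmod := Luc_mod m
  rcases hm with h0 | h1 | h2' | h3
  · have hL : Luc m % 5 = 2 := by rw [hLmod, h0]; decide
    exact big k (by omega)
  · have hL : Luc m % 5 = 1 := by rw [hLmod, h1]; decide
    have hev : Even (m+1) := Nat.even_iff.2 (by omega)
    have hepos : 0 < ψ^(m+1) := hev.pow_pos (ne_of_lt psi_neg)
    have hk' : k = 1 ∨ (k ≤ -2 ∨ 2 ≤ k) := by omega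
    rcases hk' with hk1 | hkb
    · rw [hk1]
      refine le_abs.2 (Or.inl ?_)
      push_cast
      linarith
    · exact big k hkb
  · have hL : Luc m % 5 = 3 := by rw [hLmod, h2']; decide
    exact big k (by omega)
  · have hL : Luc m % 5 = 4 := by rw [hLmod, h3]; decide
    have hev : Even (m+1) := Nat.even_iff.2 (by omega)
    have hepos : 0 < ψ^(m+1) := hev.pow_pos (ne_of_lt psi_neg)
    have hele : ψ^(m+1) ≤ ψ^4 := by
      calc ψ^(m+1) ≤ |ψ^(m+1)| := le_abs_self _
        _ = |ψ|^(m+1) := abs_pow ψ _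
        _ ≤ |ψ|^4 := pow_le_pow_of_le_one (abs_nonneg ψ) hψ1 (by omega)
        _ = |ψ^4| := (abs_pow ψ 4).symm
        _ = ψ^4 := abs_of_pos psi4_pos
    have hk' : k = -1 ∨ (k ≤ -2 ∨ 2 ≤ k) := by omega
    rcases hk' with hk1 | hkb
    · rw [hk1]
      refine le_abs.2 (Or.inr ?_)
      push_cast
      linarith
    · exact big k hkb

lemma target_eq : (φ - 1) / (φ + 2) = (1 - ψ^4)/5 := by
  rw [psi4_eq, div_eq_div_iff (ne_of_gt phi2_pos) (by norm_num : (5:ℝ) ≠ 0)]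
  unfold φ ψ
  nlinarith [sqrt5_sq]

theorem min_fib_alpha1 (N : ℕ) (hN : 4 ≤ N) :
    (Finset.Icc 1 N).inf' (Finset.nonempty_Icc.mpr (by omega))
      (fun n => distNearestInt ((Nat.fib n : ℝ) * (1 / (φ + 2)))) = (φ - 1) / (φ + 2) := by
  rw [target_eq]
  apply le_antisymm
  · have h4 : 4 ∈ Finset.Icc 1 N := Finset.mem_Icc.2 (by omega)
    refine le_trans (Finset.inf'_le _ h4) ?_
    show distNearestInt ((Nat.fib 4 : ℝ) * (1/(φ+2))) ≤ (1 - ψ^4)/5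
    have h2 : (φ + 2) ≠ 0 := ne_of_gt phi2_pos
    have hx : (Nat.fib 4 : ℝ) * (1/(φ+2)) = ((Luc 3 : ℝ) + ψ^4)/5 := by
      rw [eq_div_iff (by norm_num : (5:ℝ) ≠ 0)]
      field_simp
      have hk := key 3
      norm_num at hk ⊢
      linarith [hk]
    calc distNearestInt ((Nat.fib 4 : ℝ) * (1/(φ+2)))
        ≤ |(Nat.fib 4 : ℝ) * (1/(φ+2)) - ((1:ℤ):ℝ)| := round_le _ 1
      _ = (1 - ψ^4)/5 := by
          rw [hx, show ((Luc 3 : ℕ):ℝ) = 4 from by norm_num [Luc]]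
          rw [show ((4:ℝ) + ψ^4)/5 - ((1:ℤ):ℝ) = -((1 - ψ^4)/5) from by push_cast; ring]
          rw [abs_neg, abs_of_pos]
          linarith [psi4_lt]
  · apply Finset.le_inf'
    intro n hn
    obtain ⟨h1, -⟩ := Finset.mem_Icc.1 hn
    obtain ⟨m, rfl⟩ : ∃ m, n = m + 1 := ⟨n - 1, by omega⟩
    exact lower m
end

section
/- Let α₁ = 1/(φ+2). For every ε > 0 and every positive integer N there exists a positive integer K such that min_{K ≤ k ≤ K+N} ‖F_k α₁‖ > 1/5 − ε. -/
/- auxiliary lemmas -/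
lemma goldConj_pow (n : ℕ) : Real.goldenConj ^ (n+1) = (Nat.fib (n+1) : ℝ) * Real.goldenConj + Nat.fib n := by
  induction n with
  | zero => simp
  | succ m ih =>
    have : Real.goldenConj ^ (m+2) = Real.goldenConj ^ (m+1) * Real.goldenConj := by ring
    rw [this, ih, Nat.fib_add_two]
    push_cast
    have h2 : Real.goldenConj ^ 2 = Real.goldenConj + 1 := Real.goldenConj_sq
    nlinarith [h2]

lemma gold_pow (n : ℕ) : Real.goldenRatio ^ (n+1) = (Nat.fib (n+1) : ℝ) * Real.goldenRatio + Nat.fib n := by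
  induction n with
  | zero => simp
  | succ m ih =>
    have : Real.goldenRatio ^ (m+2) = Real.goldenRatio ^ (m+1) * Real.goldenRatio := by ring
    rw [this, ih, Nat.fib_add_two]
    push_cast
    have h2 : Real.goldenRatio ^ 2 = Real.goldenRatio + 1 := Real.goldenRatio_sq
    nlinarith [h2]

lemma fib_period (m : ℕ) : Nat.fib (m + 20) % 5 = Nat.fib m % 5 := by
  have h := Nat.fib_add m 19
  have : m + 19 + 1 = m + 20 := by ring
  rw [this] at h
  rw [h]
  norm_num [Nat.fib]
  omega

lemma lucas_mod5 (m : ℕ) : (Nat.fib (m+1) + 2 * Nat.fib m) % 5 ≠ 0 := by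
  induction m using Nat.strong_induction_on with
  | _ m ih =>
    rcases lt_or_ge m 20 with h | h
    · interval_cases m <;> decide
    · obtain ⟨j, rfl⟩ : ∃ j, m = j + 20 := ⟨m - 20, by omega⟩
      have h1 := fib_period j
      have h2 := fib_period (j+1)
      have h3 := ih j (by omega)
      have : j + 20 + 1 = j + 1 + 20 := by ring
      rw [this]
      omega

lemma key_id (m : ℕ) :
    (Nat.fib (m+2) : ℝ) * (1 / (φ + 2)) =
      ((Nat.fib (m+1) : ℝ) + 2 * Nat.fib m)/5
        - 2 * Real.goldenConj^(m+1)/5 - Real.goldenConj^(m+2)/Real.sqrt 5 := by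
  have hs : (Real.sqrt 5) ^ 2 = 5 := Real.sq_sqrt (by norm_num)
  have hsp : (0:ℝ) < Real.sqrt 5 := Real.sqrt_pos.mpr (by norm_num)
  have hφ : φ = Real.goldenRatio := rfl
  have hφpos : (0:ℝ) < φ + 2 := by rw [hφ]; positivity
  have hinv : 1 / (φ + 2) = -Real.goldenConj / Real.sqrt 5 := by
    rw [div_eq_div_iff (ne_of_gt hφpos) (ne_of_gt hsp), hφ]
    show (1:ℝ) * Real.sqrt 5 = -((1 - Real.sqrt 5)/2) * ((1 + Real.sqrt 5)/2 + 2)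
    linear_combination (-(1:ℝ)/4) * hs
  have e1 : (Nat.fib (m+2) : ℝ) * (1 / (φ + 2)) =
      ((Nat.fib (m+1) : ℝ) - Real.goldenConj^(m+2))/Real.sqrt 5 := by
    rw [hinv, show m + 2 = (m+1)+1 from rfl, goldConj_pow (m+1)]
    ring
  have hb := Real.coe_fib_eq (m+1)
  have hbs : (Nat.fib (m+1):ℝ) * Real.sqrt 5 = Real.goldenRatio^(m+1) - Real.goldenConj^(m+1) := by
    rw [hb]; field_simp
  have h7 : Real.goldenRatio + Real.goldenConj = 1 := Real.goldenRatio_add_goldenConj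
  have e2' : (Nat.fib (m+1):ℝ) * Real.sqrt 5 =
      ((Nat.fib (m+1):ℝ) + 2 * Nat.fib m) - 2 * Real.goldenConj^(m+1) := by
    rw [hbs, gold_pow m, goldConj_pow m]
    linear_combination (Nat.fib (m+1):ℝ) * h7
  have e2 : (Nat.fib (m+1):ℝ)/Real.sqrt 5 =
      (((Nat.fib (m+1):ℝ) + 2 * Nat.fib m) - 2 * Real.goldenConj^(m+1))/5 := by
    rw [div_eq_div_iff (ne_of_gt hsp) (by norm_num : (5:ℝ) ≠ 0)]
    linear_combination Real.sqrt 5 * e2' - (Nat.fib (m+1):ℝ) * hs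
  rw [e1, sub_div, e2]
  ring

theorem window_min_gt (ε : ℝ) (hε : 0 < ε) (N : ℕ) (hN : 1 ≤ N) :
    ∃ K : ℕ, 1 ≤ K ∧ ∀ k, K ≤ k → k ≤ K + N →
      distNearestInt ((Nat.fib k : ℝ) * (1 / (φ + 2))) > 1 / 5 - ε := by
  obtain ⟨n, hn⟩ := exists_pow_lt_of_lt_one hε (show (7:ℝ)/10 < 1 by norm_num)
  refine ⟨n + 2, by omega, ?_⟩
  intro k hk1 _
  obtain ⟨m, rfl⟩ : ∃ m, k = m + 2 := ⟨k - 2, by omega⟩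
  have hs : (Real.sqrt 5) ^ 2 = 5 := Real.sq_sqrt (by norm_num)
  have hsnn : (0:ℝ) ≤ Real.sqrt 5 := Real.sqrt_nonneg 5
  have hs2 : (2:ℝ) ≤ Real.sqrt 5 := by nlinarith
  have hψ : |Real.goldenConj| ≤ 7/10 := by
    have hub : Real.sqrt 5 ≤ 2.4 := by nlinarith
    rw [abs_le]
    constructor <;> · show _ ≤ _; unfold Real.goldenConj; linarith
  set t : ℝ := 7/10 with ht
  have htn : ∀ j, |Real.goldenConj ^ j| ≤ t ^ j := fun j => by
    rw [abs_pow]; exact pow_le_pow_left₀ (abs_nonneg _) hψ j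
  have hkey := key_id m
  set x : ℝ := (Nat.fib (m+2) : ℝ) * (1 / (φ + 2)) with hx
  set L : ℕ := Nat.fib (m+1) + 2 * Nat.fib m with hL
  set E : ℝ := - (2 * Real.goldenConj^(m+1)/5) - Real.goldenConj^(m+2)/Real.sqrt 5 with hE
  have hxLE : x = (L:ℝ)/5 + E := by
    rw [hkey, hE]; push_cast [hL]; ring
  -- bound on E
  have hEb : |E| ≤ t ^ (m+1) := by
    have h1 : |E| ≤ |2 * Real.goldenConj^(m+1)/5| + |Real.goldenConj^(m+2)/Real.sqrt 5| := by
      rw [hE]; exact (abs_sub _ _).trans (by rw [abs_neg])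
    have h2 : |2 * Real.goldenConj^(m+1)/5| = 2 * |Real.goldenConj^(m+1)|/5 := by
      rw [abs_div, abs_mul]; norm_num
    have h3 : |Real.goldenConj^(m+2)/Real.sqrt 5| ≤ |Real.goldenConj^(m+2)|/2 := by
      rw [abs_div, abs_of_nonneg hsnn]
      gcongr
    have h4 := htn (m+1)
    have h5 := htn (m+2)
    have h6 : t^(m+2) = t^(m+1) * t := pow_succ t (m+1)
    have h7 : (0:ℝ) ≤ t^(m+1) := by positivity
    have h8 : (0:ℝ) ≤ |Real.goldenConj^(m+2)| := abs_nonneg _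
    rw [ht] at *
    nlinarith
  have hEε : |E| < ε := by
    refine lt_of_le_of_lt (hEb.trans ?_) hn
    apply pow_le_pow_of_le_one (by norm_num) (by norm_num)
    omega
  -- the rational part is far from integers
  have hL5 : L % 5 ≠ 0 := lucas_mod5 m
  set r : ℤ := round x with hr
  have h1 : ((L:ℤ) - 5 * r) ≠ 0 := by
    intro h; apply hL5; omega
  have h2 : (1:ℝ) ≤ |(L:ℝ) - 5 * (r:ℝ)| := by
    have h := Int.one_le_abs h1
    calc (1:ℝ) = ((1:ℤ):ℝ) := by norm_num
      _ ≤ ((|(L:ℤ) - 5*r| : ℤ) : ℝ) := by exact_mod_cast h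
      _ = |(L:ℝ) - 5 * (r:ℝ)| := by push_cast; ring_nf
  have hfar : (1:ℝ)/5 ≤ |(L:ℝ)/5 - (r:ℝ)| := by
    have heq : (L:ℝ)/5 - (r:ℝ) = ((L:ℝ) - 5*(r:ℝ))/5 := by ring
    rw [heq, abs_div, abs_of_nonneg (by norm_num : (0:ℝ) ≤ 5)]
    linarith
  have hdist : distNearestInt x = |x - (r:ℝ)| := rfl
  have hlow : |(L:ℝ)/5 - (r:ℝ)| - |E| ≤ |x - (r:ℝ)| := by
    have hsplit : x - (r:ℝ) = ((L:ℝ)/5 - (r:ℝ)) + E := by rw [hxLE]; ring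
    rw [hsplit]
    have h := abs_sub_abs_le_abs_sub ((L:ℝ)/5 - (r:ℝ)) (-E)
    simp only [abs_neg, sub_neg_eq_add] at h
    exact h
  rw [hdist]
  linarith
end

section
/- Let k ≥ 6 be an integer. Consider all real sequences (G_n)_{n≥1} satisfying G_n = G_{n-1} + G_{n-2} for n ≥ 3 (equivalently, all choices of real G_1, G_2). Then the supremum over such sequences of min_{1 ≤ n ≤ k} ‖G_n‖ equals 1/5, and it is attained. -/
private def cseq : ℕ → ℤ
  | 0 => 1
  | 1 => 3
  | (n+2) => cseq (n+1) + cseq n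

private lemma cseq_mod5 (n : ℕ) :
    (cseq n % 5 = 1 ∧ cseq (n+1) % 5 = 3) ∨ (cseq n % 5 = 3 ∧ cseq (n+1) % 5 = 4) ∨
    (cseq n % 5 = 4 ∧ cseq (n+1) % 5 = 2) ∨ (cseq n % 5 = 2 ∧ cseq (n+1) % 5 = 1) := by
  induction n with
  | zero => left; constructor <;> rfl
  | succ m ih =>
    have h2 : cseq (m+1+1) = cseq (m+1) + cseq m := rfl
    omega

private lemma cseq_ne (n : ℕ) : cseq n % 5 ≠ 0 := by
  rcases cseq_mod5 n with ⟨h, _⟩ | ⟨h, _⟩ | ⟨h, _⟩ | ⟨h, _⟩ <;> omega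

private lemma dist_lower (m : ℤ) (h : m % 5 ≠ 0) : 1/5 ≤ distNearestInt ((m:ℝ)/5) := by
  unfold distNearestInt
  set r := round ((m:ℝ)/5) with hr
  have hne : m - 5 * r ≠ 0 := by omega
  have h1 : (1:ℤ) ≤ |m - 5 * r| := Int.one_le_abs hne
  have h2 : (m:ℝ)/5 - r = ((m - 5*r : ℤ) : ℝ)/5 := by push_cast; ring
  rw [h2, abs_div]
  have h3 : (1:ℝ) ≤ |((m - 5*r : ℤ) : ℝ)| := by exact_mod_cast h1
  rw [abs_of_pos (by norm_num : (0:ℝ) < 5)]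
  linarith

private lemma fract_bounds {x : ℝ} (h : 1/5 < distNearestInt x) :
    1/5 < Int.fract x ∧ Int.fract x < 4/5 := by
  unfold distNearestInt at h
  rw [abs_sub_round_eq_min] at h
  constructor
  · exact lt_of_lt_of_le h (min_le_left _ _)
  · have := lt_of_lt_of_le h (min_le_right _ _); linarith

theorem fib_like_min_large (k : ℕ) (hk : 6 ≤ k) :
    IsGreatest {y : ℝ | ∃ G : ℕ → ℝ, (∀ n, 3 ≤ n → G n = G (n - 1) + G (n - 2)) ∧
      y = (Finset.Icc 1 k).inf' (Finset.nonempty_Icc.mpr (by omega))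
            (fun n => distNearestInt (G n))} (1 / 5) := by
  constructor
  · refine ⟨fun n => (cseq n : ℝ)/5, ?_, ?_⟩
    · intro n hn
      obtain ⟨m, rfl⟩ : ∃ m, n = m + 3 := ⟨n - 3, by omega⟩
      have h1 : m + 3 - 1 = m + 2 := rfl
      have h2 : m + 3 - 2 = m + 1 := rfl
      simp only [h1, h2]
      have hc : cseq (m+3) = cseq (m+2) + cseq (m+1) := rfl
      rw [hc]; push_cast; ring
    · symm
      apply le_antisymm
      · have h2k : (2:ℕ) ∈ Finset.Icc 1 k := Finset.mem_Icc.mpr ⟨one_le_two, by omega⟩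
        refine le_trans (Finset.inf'_le _ h2k) ?_
        have hc2 : cseq 2 = 4 := rfl
        simp only [hc2]
        unfold distNearestInt
        have hr : round (((4:ℤ):ℝ)/5) = 1 := by norm_num [round_eq]
        rw [hr, abs_le]
        constructor <;> push_cast <;> linarith
      · apply Finset.le_inf'
        intro n _
        exact dist_lower (cseq n) (cseq_ne n)
  · rintro y ⟨G, hG, rfl⟩
    by_contra hcon
    push_neg at hcon
    rw [Finset.lt_inf'_iff] at hcon
    have key : ∀ n, 1 ≤ n → n ≤ 6 → 1/5 < Int.fract (G n) ∧ Int.fract (G n) < 4/5 := by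
      intro n h1 h6
      exact fract_bounds (hcon n (Finset.mem_Icc.mpr ⟨h1, by omega⟩))
    obtain ⟨l1, u1⟩ := key 1 (by norm_num) (by norm_num)
    obtain ⟨l2, u2⟩ := key 2 (by norm_num) (by norm_num)
    obtain ⟨l3, u3⟩ := key 3 (by norm_num) (by norm_num)
    obtain ⟨l4, u4⟩ := key 4 (by norm_num) (by norm_num)
    obtain ⟨l5, u5⟩ := key 5 (by norm_num) (by norm_num)
    obtain ⟨l6, u6⟩ := key 6 (by norm_num) (by norm_num)
    have r3 := hG 3 (by norm_num)
    have r4 := hG 4 (by norm_num)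
    have r5 := hG 5 (by norm_num)
    have r6 := hG 6 (by norm_num)
    norm_num at r3 r4 r5 r6
    have hm3 : ((⌊G 1⌋ + ⌊G 2⌋ - ⌊G 3⌋ : ℤ) : ℝ)
        = Int.fract (G 3) - Int.fract (G 1) - Int.fract (G 2) := by
      simp only [Int.fract]; push_cast; linarith
    have hm4 : ((⌊G 2⌋ + ⌊G 3⌋ - ⌊G 4⌋ : ℤ) : ℝ)
        = Int.fract (G 4) - Int.fract (G 2) - Int.fract (G 3) := by
      simp only [Int.fract]; push_cast; linarith
    have hm5 : ((⌊G 3⌋ + ⌊G 4⌋ - ⌊G 5⌋ : ℤ) : ℝ)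
        = Int.fract (G 5) - Int.fract (G 3) - Int.fract (G 4) := by
      simp only [Int.fract]; push_cast; linarith
    have hm6 : ((⌊G 4⌋ + ⌊G 5⌋ - ⌊G 6⌋ : ℤ) : ℝ)
        = Int.fract (G 6) - Int.fract (G 4) - Int.fract (G 5) := by
      simp only [Int.fract]; push_cast; linarith
    set m3 := (⌊G 1⌋ + ⌊G 2⌋ - ⌊G 3⌋ : ℤ) with hm3d
    set m4 := (⌊G 2⌋ + ⌊G 3⌋ - ⌊G 4⌋ : ℤ) with hm4d
    set m5 := (⌊G 3⌋ + ⌊G 4⌋ - ⌊G 5⌋ : ℤ) with hm5d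
    set m6 := (⌊G 4⌋ + ⌊G 5⌋ - ⌊G 6⌋ : ℤ) with hm6d
    have b3 : -1 ≤ m3 ∧ m3 ≤ 0 := by
      have ha : (-2:ℝ) < (m3:ℝ) := by rw [hm3]; linarith
      have hb : (m3:ℝ) < 1 := by rw [hm3]; linarith
      have ha' : (-2:ℤ) < m3 := by exact_mod_cast ha
      have hb' : m3 < 1 := by exact_mod_cast hb
      omega
    have b4 : -1 ≤ m4 ∧ m4 ≤ 0 := by
      have ha : (-2:ℝ) < (m4:ℝ) := by rw [hm4]; linarith
      have hb : (m4:ℝ) < 1 := by rw [hm4]; linarith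
      have ha' : (-2:ℤ) < m4 := by exact_mod_cast ha
      have hb' : m4 < 1 := by exact_mod_cast hb
      omega
    have b5 : -1 ≤ m5 ∧ m5 ≤ 0 := by
      have ha : (-2:ℝ) < (m5:ℝ) := by rw [hm5]; linarith
      have hb : (m5:ℝ) < 1 := by rw [hm5]; linarith
      have ha' : (-2:ℤ) < m5 := by exact_mod_cast ha
      have hb' : m5 < 1 := by exact_mod_cast hb
      omega
    have b6 : -1 ≤ m6 ∧ m6 ≤ 0 := by
      have ha : (-2:ℝ) < (m6:ℝ) := by rw [hm6]; linarith
      have hb : (m6:ℝ) < 1 := by rw [hm6]; linarith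
      have ha' : (-2:ℤ) < m6 := by exact_mod_cast ha
      have hb' : m6 < 1 := by exact_mod_cast hb
      omega
    obtain ⟨b3a, b3b⟩ := b3
    obtain ⟨b4a, b4b⟩ := b4
    obtain ⟨b5a, b5b⟩ := b5
    obtain ⟨b6a, b6b⟩ := b6
    clear hm3d hm4d hm5d hm6d hG hcon key r3 r4 r5 r6
    interval_cases m3 <;> interval_cases m4 <;> interval_cases m5 <;> interval_cases m6 <;>
      push_cast at hm3 hm4 hm5 hm6 <;> linarith
end

section
/- For every real number α, liminf_{n→∞} ‖F_n α‖ ≤ 1/5. -/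
open Filter

/-- Key local lemma A: if two consecutive signed residues are positive, the carry is 1
and the next residue is negative. -/
private lemma keyA (b e : ℕ → ℝ) (hb1 : ∀ n, 1/5 < |b n|) (hb2 : ∀ n, |b n| ≤ 1/2)
    (he : ∀ n, b (n+2) = b n + b (n+1) - e n)
    (hei : ∀ n, e n = -1 ∨ e n = 0 ∨ e n = 1) (n : ℕ)
    (h0 : 0 < b n) (h1 : 0 < b (n+1)) : e n = 1 ∧ b (n+2) < 0 := by
  have l0 := abs_le.mp (hb2 n); have l1 := abs_le.mp (hb2 (n+1))
  have l2 := abs_le.mp (hb2 (n+2)); have l3 := abs_le.mp (hb2 (n+3))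
  have l4 := abs_le.mp (hb2 (n+4)); have l5 := abs_le.mp (hb2 (n+5))
  have s0 : 1/5 < b n := by
    rcases lt_abs.mp (hb1 n) with h | h
    · exact h
    · linarith
  have s1 : 1/5 < b (n+1) := by
    rcases lt_abs.mp (hb1 (n+1)) with h | h
    · exact h
    · linarith
  have he0 := he n; have he1 := he (n+1); have he2 := he (n+2); have he3 := he (n+3)
  rcases hei n with h | h | h
  · exfalso; linarith
  · exfalso
    -- e0 = 0, b2 = b0+b1 > 2/5
    rcases hei (n+1) with h1e | h1e | h1e
    · linarith
    · linarith
    · -- e1 = 1, b3 = b1+b2-1 ≤ 0 so b3 < -1/5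
      have s3 : b (n+3) < -(1/5) := by
        rcases lt_abs.mp (hb1 (n+3)) with h' | h'
        · exfalso; linarith
        · linarith
      rcases hei (n+2) with h2e | h2e | h2e
      · linarith
      · -- e2 = 0, b4 = b2+b3, must be > 1/5
        have s4 : 1/5 < b (n+4) := by
          rcases lt_abs.mp (hb1 (n+4)) with h' | h'
          · exact h'
          · exfalso; linarith
        rcases hei (n+3) with h3e | h3e | h3e
        · linarith
        · rcases lt_abs.mp (hb1 (n+5)) with h' | h'
          · linarith
          · linarith
        · linarith
      · linarith
  · -- e0 = 1
    refine ⟨h, ?_⟩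
    rcases lt_abs.mp (hb1 (n+2)) with h' | h'
    · exfalso; linarith
    · linarith

/-- Key local lemma B: (+,−) forces carry 0 and next residue negative. -/
private lemma keyB (b e : ℕ → ℝ) (hb1 : ∀ n, 1/5 < |b n|) (hb2 : ∀ n, |b n| ≤ 1/2)
    (he : ∀ n, b (n+2) = b n + b (n+1) - e n)
    (hei : ∀ n, e n = -1 ∨ e n = 0 ∨ e n = 1) (n : ℕ)
    (h0 : 0 < b n) (h1 : b (n+1) < 0) : e n = 0 ∧ b (n+2) < 0 := by
  have l0 := abs_le.mp (hb2 n); have l1 := abs_le.mp (hb2 (n+1))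
  have l2 := abs_le.mp (hb2 (n+2)); have l3 := abs_le.mp (hb2 (n+3))
  have l4 := abs_le.mp (hb2 (n+4))
  have s0 : 1/5 < b n := by
    rcases lt_abs.mp (hb1 n) with h | h
    · exact h
    · linarith
  have s1 : b (n+1) < -(1/5) := by
    rcases lt_abs.mp (hb1 (n+1)) with h | h
    · linarith
    · linarith
  have he0 := he n; have he1 := he (n+1); have he2 := he (n+2)
  rcases hei n with h | h | h
  · exfalso; linarith
  · refine ⟨h, ?_⟩
    rcases lt_abs.mp (hb1 (n+2)) with h2s | h2s
    · exfalso
      -- b2 = b0+b1 > 1/5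
      rcases hei (n+1) with h1e | h1e | h1e
      · linarith
      · -- e1 = 0, b3 = b1+b2
        rcases lt_abs.mp (hb1 (n+3)) with h3s | h3s
        · linarith
        · rcases hei (n+2) with h2e | h2e | h2e
          · linarith
          · rcases lt_abs.mp (hb1 (n+4)) with h4s | h4s
            · linarith
            · linarith
          · linarith
      · linarith
    · linarith
  · exfalso; linarith

/-- Endgame: a survivor sequence starting with two positive values is impossible. -/
private lemma endgame (b e : ℕ → ℝ) (hb1 : ∀ n, 1/5 < |b n|) (hb2 : ∀ n, |b n| ≤ 1/2)
    (he : ∀ n, b (n+2) = b n + b (n+1) - e n)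
    (hei : ∀ n, e n = -1 ∨ e n = 0 ∨ e n = 1)
    (h0 : 0 < b 0) (h1 : 0 < b 1) : False := by
  -- negated versions of the key lemmas
  have hb1' : ∀ n, 1/5 < |(-b ·) n| := fun n => by simpa using hb1 n
  have hb2' : ∀ n, |(-b ·) n| ≤ 1/2 := fun n => by simpa using hb2 n
  have he' : ∀ n, (-b ·) (n+2) = (-b ·) n + (-b ·) (n+1) - (-e ·) n := fun n => by
    have := he n; simp only; linarith
  have hei' : ∀ n, (-e ·) n = -1 ∨ (-e ·) n = 0 ∨ (-e ·) n = 1 := fun n => by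
    rcases hei n with h | h | h <;> simp [h]
  have keyC : ∀ m, b m < 0 → b (m+1) < 0 → e m = -1 ∧ 0 < b (m+2) := by
    intro m hm hm1
    obtain ⟨h1', h2'⟩ := keyA (-b ·) (-e ·) hb1' hb2' he' hei' m (by simpa using hm)
      (by simpa using hm1)
    constructor
    · linarith
    · linarith
  have keyD : ∀ m, b m < 0 → 0 < b (m+1) → e m = 0 ∧ 0 < b (m+2) := by
    intro m hm hm1
    obtain ⟨h1', h2'⟩ := keyB (-b ·) (-e ·) hb1' hb2' he' hei' m (by simpa using hm)
      (by simpa using hm1)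
    constructor
    · linarith
    · linarith
  -- one full period of the forced pattern
  have step : ∀ m, 0 < b m → 0 < b (m+1) →
      e m = 1 ∧ b (m+2) < 0 ∧ e (m+1) = 0 ∧ b (m+3) < 0 ∧ e (m+2) = -1 ∧ 0 < b (m+4) ∧
      e (m+3) = 0 ∧ 0 < b (m+5) := by
    intro m hm0 hm1
    obtain ⟨hA1, hA2⟩ := keyA b e hb1 hb2 he hei m hm0 hm1
    obtain ⟨hB1, hB2⟩ := keyB b e hb1 hb2 he hei (m+1) hm1 hA2
    obtain ⟨hC1, hC2⟩ := keyC (m+2) hA2 hB2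
    obtain ⟨hD1, hD2⟩ := keyD (m+3) hB2 hC2
    exact ⟨hA1, hA2, hB1, hB2, hC1, hC2, hD1, hD2⟩
  have start : ∀ k, 0 < b (4*k) ∧ 0 < b (4*k+1) := by
    intro k
    induction k with
    | zero => exact ⟨h0, h1⟩
    | succ k ih =>
      obtain ⟨_, _, _, _, _, h4, _, h5⟩ := step (4*k) ih.1 ih.2
      refine ⟨?_, ?_⟩
      · have h' : 4*(k+1) = 4*k+4 := by ring
        rw [h']; exact h4
      · have h' : 4*(k+1)+1 = 4*k+5 := by ring
        rw [h']; exact h5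
  -- golden ratio
  set s : ℝ := Real.sqrt 5 with hsdef
  have hs : s^2 = 5 := Real.sq_sqrt (by norm_num)
  have hs0 : 0 ≤ s := Real.sqrt_nonneg 5
  have hs1 : 2 < s := by nlinarith
  have hs2 : s < 5/2 := by nlinarith
  set φ : ℝ := (1+s)/2 with hφdef
  have hφ2 : φ^2 = φ + 1 := by rw [hφdef]; field_simp; linarith [hs]
  have hφlb : 3/2 < φ := by rw [hφdef]; linarith
  have hφub : φ < 2 := by rw [hφdef]; linarith
  -- unstable coordinate
  set u : ℕ → ℝ := fun k => b k + φ * b (k+1) with hudef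
  have hu : ∀ k, u (k+1) = φ * (u k - e k) := by
    intro k
    show b (k+1) + φ * b (k+2) = φ * ((b k + φ * b (k+1)) - e k)
    rw [he k]
    linear_combination (-(b (k+1))) * hφ2
  have hu4 : ∀ k, u (4*k+4) = φ^4 * u (4*k) - φ^3 := by
    intro k
    obtain ⟨pe0, p2, pe1, p3, pe2, p4, pe3, p5⟩ := step (4*k) (start k).1 (start k).2
    have q1 : u (4*k+1) = φ * (u (4*k) - e (4*k)) := hu (4*k)
    have q2 : u (4*k+2) = φ * (u (4*k+1) - e (4*k+1)) := hu (4*k+1)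
    have q3 : u (4*k+3) = φ * (u (4*k+2) - e (4*k+2)) := hu (4*k+2)
    have q4 : u (4*k+4) = φ * (u (4*k+3) - e (4*k+3)) := hu (4*k+3)
    rw [pe0] at q1; rw [pe1] at q2; rw [pe2] at q3; rw [pe3] at q4
    rw [q4, q3, q2, q1]
    linear_combination (-(φ^2)) * hφ2
  -- fixed point of the period map
  set w : ℝ := (5+s)/10 with hwdef
  have hwfix : φ^4 * w - φ^3 = w := by
    rw [hφdef, hwdef]
    linear_combination ((s^3+9*s^2+11*s+19)/160) * hs
  set d : ℕ → ℝ := fun k => u (4*k) - w with hddef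
  have hd : ∀ k, d (k+1) = φ^4 * d k := by
    intro k
    show u (4*(k+1)) - w = φ^4 * (u (4*k) - w)
    have h' : 4*(k+1) = 4*k+4 := by ring
    rw [h', hu4 k]
    linear_combination hwfix
  have hdk : ∀ k, d k = (φ^4)^k * d 0 := by
    intro k
    induction k with
    | zero => simp
    | succ k ih => rw [hd k, ih, pow_succ]; ring
  have hub : ∀ k, |u k| ≤ 3/2 := by
    intro k
    have h3' := hb2 k; have h4' := hb2 (k+1)
    have h5' : |u k| ≤ |b k| + φ * |b (k+1)| := by
      calc |u k| = |b k + φ * b (k+1)| := rfl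
      _ ≤ |b k| + |φ * b (k+1)| := abs_add_le _ _
      _ = |b k| + φ * |b (k+1)| := by
          rw [abs_mul, abs_of_pos (show (0:ℝ) < φ by linarith)]
    nlinarith
  have hwabs : |w| ≤ 1 := by
    rw [hwdef, abs_of_pos (by linarith)]; linarith
  have hd0 : d 0 = 0 := by
    by_contra hne
    have habs : 0 < |d 0| := abs_pos.mpr hne
    have hφ4 : (5:ℝ) < φ^4 := by nlinarith
    obtain ⟨k, hk⟩ := pow_unbounded_of_one_lt (x := (5/2)/|d 0|) (y := φ^4) (by linarith)
    have hkk : 5/2 < (φ^4)^k * |d 0| := by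
      rw [div_lt_iff₀ habs] at hk; linarith
    have hdabs : |d k| = (φ^4)^k * |d 0| := by
      rw [hdk k, abs_mul, abs_of_pos (pow_pos (by linarith) k)]
    have hdb : |d k| ≤ 5/2 := by
      have : |u (4*k) - w| ≤ |u (4*k)| + |w| := abs_sub _ _
      have h5 := hub (4*k)
      calc |d k| = |u (4*k) - w| := rfl
        _ ≤ |u (4*k)| + |w| := this
        _ ≤ 5/2 := by linarith
    linarith
  have hu0 : u 0 = w := by
    have : u 0 - w = 0 := hd0
    linarith
  -- final contradiction
  obtain ⟨pe0, p2, pe1, p3, _, _, _, _⟩ := step 0 h0 h1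
  have hB1 : 1/5 < b 1 := by
    rcases lt_abs.mp (hb1 1) with h | h
    · exact h
    · linarith
  have hB3 : b 3 < -(1/5) := by
    rcases lt_abs.mp (hb1 3) with h | h
    · linarith
    · linarith
  have heq0 : b 2 = b 0 + b 1 - e 0 := he 0
  have heq1 : b 3 = b 1 + b 2 - e 1 := he 1
  rw [pe0] at heq0; rw [pe1] at heq1
  have hu00 : b 0 + φ * b 1 = w := hu0
  rw [hwdef, hφdef] at hu00
  nlinarith [mul_pos (show (0:ℝ) < 3 - s by linarith) (show (0:ℝ) < b 1 - 1/5 by linarith)]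

theorem liminf_fib_dist_le (α : ℝ) :
    Filter.liminf (fun n : ℕ => distNearestInt ((Nat.fib n : ℝ) * α)) Filter.atTop ≤ 1 / 5 := by
  by_contra hcon
  push_neg at hcon
  have hbd : Filter.IsBoundedUnder (· ≥ ·) Filter.atTop
      (fun n : ℕ => distNearestInt ((Nat.fib n : ℝ) * α)) :=
    Filter.isBoundedUnder_of ⟨0, fun n => abs_nonneg _⟩
  have hev := Filter.eventually_lt_of_lt_liminf hcon hbd
  rw [Filter.eventually_atTop] at hev
  obtain ⟨N, hN⟩ := hev
  obtain ⟨b, e, hb1, hb2, he, hei⟩ :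
      ∃ b e : ℕ → ℝ, (∀ n, 1/5 < |b n|) ∧ (∀ n, |b n| ≤ 1/2) ∧
        (∀ n, b (n+2) = b n + b (n+1) - e n) ∧ (∀ n, e n = -1 ∨ e n = 0 ∨ e n = 1) := by
    have hfib : ∀ n : ℕ, (Nat.fib (N+(n+2)) : ℝ) * α
        = (Nat.fib (N+n) : ℝ) * α + (Nat.fib (N+(n+1)) : ℝ) * α := by
      intro n
      have h' : Nat.fib (N+(n+2)) = Nat.fib (N+n) + Nat.fib (N+(n+1)) := by
        rw [show N+(n+2) = (N+n)+2 by ring, Nat.fib_add_two, show N+(n+1) = (N+n)+1 by ring]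
      rw [h']; push_cast; ring
    refine ⟨fun n => (Nat.fib (N+n) : ℝ) * α - ((round ((Nat.fib (N+n) : ℝ) * α) : ℤ) : ℝ),
      fun n => ((Nat.fib (N+n) : ℝ) * α - ((round ((Nat.fib (N+n) : ℝ) * α) : ℤ) : ℝ))
        + ((Nat.fib (N+(n+1)) : ℝ) * α - ((round ((Nat.fib (N+(n+1)) : ℝ) * α) : ℤ) : ℝ))
        - ((Nat.fib (N+(n+2)) : ℝ) * α - ((round ((Nat.fib (N+(n+2)) : ℝ) * α) : ℤ) : ℝ)),
      ?_, ?_, ?_, ?_⟩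
    · intro n
      simpa [distNearestInt] using hN (N+n) (Nat.le_add_right N n)
    · intro n
      exact abs_sub_round _
    · intro n
      beta_reduce
      ring
    · intro n
      beta_reduce
      have h0' := abs_sub_round ((Nat.fib (N+n) : ℝ) * α)
      have h1' := abs_sub_round ((Nat.fib (N+(n+1)) : ℝ) * α)
      have h2' := abs_sub_round ((Nat.fib (N+(n+2)) : ℝ) * α)
      have habs0 := abs_le.mp h0'
      have habs1 := abs_le.mp h1'
      have habs2 := abs_le.mp h2'
      have hcast : ((Nat.fib (N+n) : ℝ) * α - ((round ((Nat.fib (N+n) : ℝ) * α) : ℤ) : ℝ))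
          + ((Nat.fib (N+(n+1)) : ℝ) * α - ((round ((Nat.fib (N+(n+1)) : ℝ) * α) : ℤ) : ℝ))
          - ((Nat.fib (N+(n+2)) : ℝ) * α - ((round ((Nat.fib (N+(n+2)) : ℝ) * α) : ℤ) : ℝ))
          = ((round ((Nat.fib (N+(n+2)) : ℝ) * α) - round ((Nat.fib (N+n) : ℝ) * α)
              - round ((Nat.fib (N+(n+1)) : ℝ) * α) : ℤ) : ℝ) := by
        push_cast
        linarith [hfib n]
      rw [hcast]
      have hb3 : |((round ((Nat.fib (N+(n+2)) : ℝ) * α) - round ((Nat.fib (N+n) : ℝ) * α)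
          - round ((Nat.fib (N+(n+1)) : ℝ) * α) : ℤ) : ℝ)| < 2 := by
        rw [← hcast]
        have hx1 : |(Nat.fib (N+n) : ℝ) * α - ((round ((Nat.fib (N+n) : ℝ) * α) : ℤ) : ℝ)
            + ((Nat.fib (N+(n+1)) : ℝ) * α - ((round ((Nat.fib (N+(n+1)) : ℝ) * α) : ℤ) : ℝ))|
            ≤ 1 := by
          refine (abs_add_le _ _).trans ?_
          push_cast at h0' h1' ⊢
          linarith
        refine lt_of_le_of_lt ((abs_sub _ _).trans ?_) (by norm_num : (3:ℝ)/2 < 2)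
        push_cast at hx1 h2' ⊢
        linarith
      have hz := abs_lt.mp hb3
      have hlo : (-2 : ℤ) < round ((Nat.fib (N+(n+2)) : ℝ) * α) - round ((Nat.fib (N+n) : ℝ) * α)
          - round ((Nat.fib (N+(n+1)) : ℝ) * α) := by exact_mod_cast hz.1
      have hhi : (round ((Nat.fib (N+(n+2)) : ℝ) * α) - round ((Nat.fib (N+n) : ℝ) * α)
          - round ((Nat.fib (N+(n+1)) : ℝ) * α) : ℤ) < 2 := by exact_mod_cast hz.2
      have hcases : (round ((Nat.fib (N+(n+2)) : ℝ) * α) - round ((Nat.fib (N+n) : ℝ) * α)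
          - round ((Nat.fib (N+(n+1)) : ℝ) * α) : ℤ) = -1
          ∨ (round ((Nat.fib (N+(n+2)) : ℝ) * α) - round ((Nat.fib (N+n) : ℝ) * α)
          - round ((Nat.fib (N+(n+1)) : ℝ) * α) : ℤ) = 0
          ∨ (round ((Nat.fib (N+(n+2)) : ℝ) * α) - round ((Nat.fib (N+n) : ℝ) * α)
          - round ((Nat.fib (N+(n+1)) : ℝ) * α) : ℤ) = 1 := by omega
      rcases hcases with h | h | h
      · left; rw [h]; norm_num
      · right; left; rw [h]; norm_num
      · right; right; rw [h]; norm_num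
  -- sign analysis on the first two terms
  rcases lt_abs.mp (hb1 0) with h0 | h0 <;> rcases lt_abs.mp (hb1 1) with h1 | h1
  · -- b0 > 0, b1 > 0
    exact endgame b e hb1 hb2 he hei (by linarith) (by linarith)
  · -- b0 > 0, b1 < 0 : shift by one and flip
    obtain ⟨_, hneg2⟩ := keyB b e hb1 hb2 he hei 0 (by linarith) (by linarith)
    refine endgame (fun k => -b (k+1)) (fun k => -e (k+1))
      (fun n => by show 1/5 < |(-b (n+1+1-1))|; rw [abs_neg]; exact hb1 (n+1))
      (fun n => by show |(-b (n+1+1-1))| ≤ 1/2; rw [abs_neg]; exact hb2 (n+1))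
      (fun n => by show -b (n+3) = -b (n+1) + -b (n+2) - -e (n+1); have := he (n+1); linarith)
      (fun n => by
        show -e (n+1) = -1 ∨ -e (n+1) = 0 ∨ -e (n+1) = 1
        rcases hei (n+1) with h | h | h <;> rw [h] <;> norm_num)
      (by show 0 < -b 1; linarith) (by show 0 < -b 2; linarith)
  · -- b0 < 0, b1 > 0 : shift by one
    obtain ⟨h1', h2'⟩ := keyB (fun k => -b k) (fun k => -e k)
      (fun n => by show 1/5 < |(-b n)|; rw [abs_neg]; exact hb1 n)
      (fun n => by show |(-b n)| ≤ 1/2; rw [abs_neg]; exact hb2 n)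
      (fun n => by show -b (n+2) = -b n + -b (n+1) - -e n; have := he n; linarith)
      (fun n => by
        show -e n = -1 ∨ -e n = 0 ∨ -e n = 1
        rcases hei n with h | h | h <;> rw [h] <;> norm_num)
      0 (by show 0 < -b 0; linarith) (by show -b 1 < 0; linarith)
    have hpos2 : 0 < b 2 := by
      have : -b 2 < 0 := h2'
      linarith
    exact endgame (fun k => b (k+1)) (fun k => e (k+1)) (fun n => hb1 (n+1))
      (fun n => hb2 (n+1)) (fun n => he (n+1)) (fun n => hei (n+1))
      (by show 0 < b 1; linarith) (by show 0 < b 2; linarith)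
  · -- b0 < 0, b1 < 0 : flip
    exact endgame (fun k => -b k) (fun k => -e k)
      (fun n => by show 1/5 < |(-b n)|; rw [abs_neg]; exact hb1 n)
      (fun n => by show |(-b n)| ≤ 1/2; rw [abs_neg]; exact hb2 n)
      (fun n => by show -b (n+2) = -b n + -b (n+1) - -e n; have := he n; linarith)
      (fun n => by
        show -e n = -1 ∨ -e n = 0 ∨ -e n = 1
        rcases hei n with h | h | h <;> rw [h] <;> norm_num)
      (by show 0 < -b 0; linarith) (by show 0 < -b 1; linarith)
end

section
/- For every real number α, liminf_{n→∞} ‖φ^n α‖ ≤ 1/5. -/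
set_option maxHeartbeats 4000000 in
lemma key_fib_mod_one (a b c d e f : ℝ) (m1 m2 m3 m4 : ℤ)
    (hc : c = b + a - m1) (hd : d = c + b - m2) (he : e = d + c - m3) (hf : f = e + d - m4)
    (ba : |a| ≤ 1/2) (bb : |b| ≤ 1/2) (bc : |c| ≤ 1/2) (bd : |d| ≤ 1/2)
    (be : |e| ≤ 1/2) (bf : |f| ≤ 1/2)
    (ha : 1/5 < |a|) (hb : 1/5 < |b|) (hcc : 1/5 < |c|) (hdd : 1/5 < |d|)
    (hee : 1/5 < |e|) (hff : 1/5 < |f|) : False := by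
  rw [abs_le] at ba bb bc bd be bf
  obtain ⟨ba1, ba2⟩ := ba
  obtain ⟨bb1, bb2⟩ := bb
  obtain ⟨bc1, bc2⟩ := bc
  obtain ⟨bd1, bd2⟩ := bd
  obtain ⟨be1, be2⟩ := be
  obtain ⟨bf1, bf2⟩ := bf
  have k1b : (-2 : ℤ) < m1 ∧ m1 < 2 := by
    constructor <;> [exact_mod_cast (by linarith : (-2:ℝ) < (m1:ℝ));
      exact_mod_cast (by linarith : (m1:ℝ) < 2)]
  have k1l : (-1 : ℤ) ≤ m1 := by omega
  have k1u : m1 ≤ 1 := by omega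
  have k2b : (-2 : ℤ) < m2 ∧ m2 < 2 := by
    constructor <;> [exact_mod_cast (by linarith : (-2:ℝ) < (m2:ℝ));
      exact_mod_cast (by linarith : (m2:ℝ) < 2)]
  have k2l : (-1 : ℤ) ≤ m2 := by omega
  have k2u : m2 ≤ 1 := by omega
  have k3b : (-2 : ℤ) < m3 ∧ m3 < 2 := by
    constructor <;> [exact_mod_cast (by linarith : (-2:ℝ) < (m3:ℝ));
      exact_mod_cast (by linarith : (m3:ℝ) < 2)]
  have k3l : (-1 : ℤ) ≤ m3 := by omega
  have k3u : m3 ≤ 1 := by omega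
  have k4b : (-2 : ℤ) < m4 ∧ m4 < 2 := by
    constructor <;> [exact_mod_cast (by linarith : (-2:ℝ) < (m4:ℝ));
      exact_mod_cast (by linarith : (m4:ℝ) < 2)]
  have k4l : (-1 : ℤ) ≤ m4 := by omega
  have k4u : m4 ≤ 1 := by omega
  rw [lt_abs] at ha hb hcc hdd hee hff
  rcases ha with ha | ha <;> rcases hb with hb | hb <;>
    interval_cases m1 <;> push_cast at hc <;> rcases hcc with hcc | hcc <;>
    first
    | linarith
    | (interval_cases m2 <;> push_cast at hd <;> rcases hdd with hdd | hdd <;>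
       first
       | linarith
       | (interval_cases m3 <;> push_cast at he <;> rcases hee with hee | hee <;>
          first
          | linarith
          | (interval_cases m4 <;> push_cast at hf <;> rcases hff with hff | hff <;>
             linarith)))

theorem liminf_golden_dist_le (α : ℝ) :
    Filter.liminf (fun n : ℕ => distNearestInt (φ ^ n * α)) Filter.atTop ≤ 1 / 5 := by
  have h5 : Real.sqrt 5 ^ 2 = 5 := Real.sq_sqrt (by norm_num)
  have hphi : φ ^ 2 = φ + 1 := by unfold φ; linear_combination h5 / 4
  have hrec : ∀ n : ℕ, φ ^ (n + 2) * α = φ ^ (n + 1) * α + φ ^ n * α := by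
    intro n
    have h2 : φ ^ (n + 2) = φ ^ (n + 1) + φ ^ n := by
      rw [pow_add, hphi, mul_add, mul_one, ← pow_succ]
    rw [h2]; ring
  have hfreq : ∃ᶠ n in Filter.atTop, distNearestInt (φ ^ n * α) ≤ 1 / 5 := by
    rw [Filter.frequently_atTop]
    intro N
    by_contra hcon
    push_neg at hcon
    have hco : ∀ k : ℕ, 1/5 < |φ ^ (N + k) * α - (round (φ ^ (N + k) * α) : ℝ)| := by
      intro k
      have := hcon (N + k) (Nat.le_add_right N k)
      simpa [distNearestInt] using this
    have key_eq : ∀ j : ℕ,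
        φ ^ (N + j + 2) * α - (round (φ ^ (N + j + 2) * α) : ℝ) =
          (φ ^ (N + j + 1) * α - (round (φ ^ (N + j + 1) * α) : ℝ)) +
            (φ ^ (N + j) * α - (round (φ ^ (N + j) * α) : ℝ)) -
          ((round (φ ^ (N + j + 2) * α) - round (φ ^ (N + j + 1) * α)
            - round (φ ^ (N + j) * α) : ℤ) : ℝ) := by
      intro j
      push_cast
      linear_combination hrec (N + j)
    exact key_fib_mod_one
      (φ ^ (N + 0) * α - (round (φ ^ (N + 0) * α) : ℝ))
      (φ ^ (N + 1) * α - (round (φ ^ (N + 1) * α) : ℝ))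
      (φ ^ (N + 2) * α - (round (φ ^ (N + 2) * α) : ℝ))
      (φ ^ (N + 3) * α - (round (φ ^ (N + 3) * α) : ℝ))
      (φ ^ (N + 4) * α - (round (φ ^ (N + 4) * α) : ℝ))
      (φ ^ (N + 5) * α - (round (φ ^ (N + 5) * α) : ℝ))
      _ _ _ _ (key_eq 0) (key_eq 1) (key_eq 2) (key_eq 3)
      (abs_sub_round _) (abs_sub_round _) (abs_sub_round _)
      (abs_sub_round _) (abs_sub_round _) (abs_sub_round _)
      (hco 0) (hco 1) (hco 2) (hco 3) (hco 4) (hco 5)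
  have hbd : Filter.IsBoundedUnder (· ≥ ·) Filter.atTop
      (fun n : ℕ => distNearestInt (φ ^ n * α)) :=
    Filter.isBoundedUnder_of ⟨0, fun n => abs_nonneg _⟩
  exact Filter.liminf_le_of_frequently_le hfreq hbd
end

section
/- For every integer t ≥ 1 the following closed-form expressions hold: 5·T_{4t} = 2F_{4t} − F_{4t−1} + 1, 5·T_{4t+1} = F_{4t} + 2F_{4t−1} − 2, 5·T_{4t+2} = 3F_{4t} + F_{4t−1} − 1, and 5·T_{4t+3} = 4F_{4t} + 3F_{4t−1} + 2. -/
/-- `T n = Σ_{k=1}^{⌊n/2⌋} (−1)^{k+1} F_{n−2k}`. -/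
def T (n : ℕ) : ℤ := ∑ k ∈ Finset.Icc 1 (n / 2), (-1 : ℤ) ^ (k + 1) * (Nat.fib (n - 2 * k) : ℤ)

lemma T_range (n : ℕ) :
    T n = ∑ i ∈ Finset.range (n / 2), (-1 : ℤ) ^ i * (Nat.fib (n - 2 * (1 + i)) : ℤ) := by
  rw [T, ← Finset.Ico_add_one_right_eq_Icc, Finset.sum_Ico_eq_sum_range,
    show n / 2 + 1 - 1 = n / 2 from by omega]
  apply Finset.sum_congr rfl
  intro i _
  rw [pow_add, pow_add]
  ring

lemma T_rec (n : ℕ) : T (n + 2) = (Nat.fib n : ℤ) - T n := by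
  rw [T_range, T_range]
  have h : (n + 2) / 2 = n / 2 + 1 := by omega
  rw [h, Finset.sum_range_succ']
  have h0 : n + 2 - 2 * (1 + 0) = n := by omega
  rw [h0]
  simp only [pow_zero, one_mul]
  have h1 : ∀ i, n + 2 - 2 * (1 + (i + 1)) = n - 2 * (1 + i) := by intro i; omega
  have : ∑ i ∈ Finset.range (n / 2), (-1 : ℤ) ^ (i + 1) * (Nat.fib (n + 2 - 2 * (1 + (i + 1))) : ℤ)
      = - ∑ i ∈ Finset.range (n / 2), (-1 : ℤ) ^ i * (Nat.fib (n - 2 * (1 + i)) : ℤ) := by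
    rw [← Finset.sum_neg_distrib]
    apply Finset.sum_congr rfl
    intro i _
    rw [h1 i, pow_succ]
    ring
  rw [this]
  ring

lemma fib_cast (n : ℕ) : (Nat.fib (n + 2) : ℤ) = Nat.fib n + Nat.fib (n + 1) := by
  rw [Nat.fib_add_two]; push_cast; ring

theorem T_closed_forms (t : ℕ) (ht : 1 ≤ t) :
    5 * T (4 * t) = 2 * (Nat.fib (4 * t) : ℤ) - (Nat.fib (4 * t - 1) : ℤ) + 1 ∧
    5 * T (4 * t + 1) = (Nat.fib (4 * t) : ℤ) + 2 * (Nat.fib (4 * t - 1) : ℤ) - 2 ∧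
    5 * T (4 * t + 2) = 3 * (Nat.fib (4 * t) : ℤ) + (Nat.fib (4 * t - 1) : ℤ) - 1 ∧
    5 * T (4 * t + 3) = 4 * (Nat.fib (4 * t) : ℤ) + 3 * (Nat.fib (4 * t - 1) : ℤ) + 2 := by
  obtain ⟨s, rfl⟩ : ∃ s, t = s + 1 := ⟨t - 1, by omega⟩
  clear ht
  induction s with
  | zero =>
    refine ⟨?_, ?_, ?_, ?_⟩ <;> norm_num [T] <;> decide
  | succ s ih =>
    simp only [show 4 * (s + 1 + 1) = 4 * s + 8 from by ring,
      show 4 * (s + 1 + 1) - 1 = 4 * s + 7 from by omega,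
      show 4 * s + 8 + 1 = 4 * s + 9 from rfl, show 4 * s + 8 + 2 = 4 * s + 10 from rfl,
      show 4 * s + 8 + 3 = 4 * s + 11 from rfl]
    simp only [show 4 * (s + 1) = 4 * s + 4 from by ring,
      show 4 * (s + 1) - 1 = 4 * s + 3 from by omega,
      show 4 * s + 4 + 1 = 4 * s + 5 from rfl, show 4 * s + 4 + 2 = 4 * s + 6 from rfl,
      show 4 * s + 4 + 3 = 4 * s + 7 from rfl] at ih
    obtain ⟨i0, i1, i2, i3⟩ := ih
    have r0 := T_rec (4 * s + 4)
    have r1 := T_rec (4 * s + 5)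
    have r2 := T_rec (4 * s + 6)
    have r3 := T_rec (4 * s + 7)
    have r4 := T_rec (4 * s + 8)
    have r5 := T_rec (4 * s + 9)
    have f5 := fib_cast (4 * s + 3)
    have f6 := fib_cast (4 * s + 4)
    have f7 := fib_cast (4 * s + 5)
    have f8 := fib_cast (4 * s + 6)
    have f9 := fib_cast (4 * s + 7)
    have f10 := fib_cast (4 * s + 8)
    have f11 := fib_cast (4 * s + 9)
    have f4 : (Nat.fib (4 * s + 4) : ℤ) = Nat.fib (4 * s + 2) + Nat.fib (4 * s + 3) :=
      fib_cast (4 * s + 2)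
    simp only [show 4 * s + 8 - 1 = 4 * s + 7 from by omega,
      show 4 * s + 4 - 1 = 4 * s + 3 from by omega,
      show 4 * s + 8 + 2 = 4 * s + 10 from by omega,
      show 4 * s + 9 + 2 = 4 * s + 11 from by omega,
      show 4 * s + 8 + 1 = 4 * s + 9 from by omega,
      show 4 * s + 9 + 1 = 4 * s + 10 from by omega] at *
    refine ⟨by linarith, by linarith, by linarith, by linarith⟩
end
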